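/- arXiv:1811.03770 — 6 statements merged into one kernel-verified Lean document; each statement's English description precedes it below -/
import Mathlib

section
/- Let p be a prime, r an integer, s ≥ 1 an integer, and n, n' positive integers with n ≡ n' mod p^s. Set T(n) := Σ_{1 ≤ k < n, p ∤ k} k^{−(r+1)} ∈ ℤ_p. Then T(n) ≡ T(n') mod p^{s−1} ℤ_p in all cases; moreover T(n) ≡ T(n') mod p^s ℤ_p if either p ≥ 3 and (p−1) ∤ (r+1), or p = 2, s ≥ 2 and 2 ∤ (r+1). (In particular n ↦ T(n) extends to a continuous function ψ̃_p^{(r)} : ℤ_p → ℤ_p.) -/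
open Finset Filter

section Aux
variable {p : ℕ} [Fact p.Prime]


lemma norm_pow_sub_pow (x y : ℚ_[p]) (hx : ‖x‖ ≤ 1) (hy : ‖y‖ ≤ 1) (n : ℕ) :
    ‖x ^ n - y ^ n‖ ≤ ‖x - y‖ := by
  induction n with
  | zero => simp
  | succ n ih =>
    have : x ^ (n+1) - y ^ (n+1) = x ^ n * (x - y) + (x ^ n - y ^ n) * y := by ring
    rw [this]
    refine (Padic.nonarchimedean _ _).trans (max_le ?_ ?_)
    · rw [norm_mul]
      calc ‖x^n‖ * ‖x - y‖ ≤ 1 * ‖x - y‖ := by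
            gcongr; exact (norm_pow x n).le.trans (by simpa using pow_le_one₀ (norm_nonneg x) hx)
        _ = ‖x - y‖ := one_mul _
    · rw [norm_mul]
      calc ‖x^n - y^n‖ * ‖y‖ ≤ ‖x - y‖ * 1 := by gcongr
        _ = ‖x - y‖ := mul_one _

lemma norm_zpow_sub_zpow (x y : ℚ_[p]) (hx : ‖x‖ = 1) (hy : ‖y‖ = 1) (t : ℤ) :
    ‖x ^ t - y ^ t‖ ≤ ‖x - y‖ := by
  have hx0 : x ≠ 0 := by intro h; simp [h] at hx
  have hy0 : y ≠ 0 := by intro h; simp [h] at hy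
  rcases t with n | n
  · simpa using norm_pow_sub_pow x y hx.le hy.le n
  · rw [zpow_negSucc, zpow_negSucc]
    have hxn : ‖x ^ (n+1)‖ = 1 := by rw [norm_pow, hx, one_pow]
    have hyn : ‖y ^ (n+1)‖ = 1 := by rw [norm_pow, hy, one_pow]
    have key : (x ^ (n+1))⁻¹ - (y ^ (n+1))⁻¹ =
        (y ^ (n+1) - x ^ (n+1)) * (x ^ (n+1))⁻¹ * (y ^ (n+1))⁻¹ := by
      field_simp
    rw [key, norm_mul, norm_mul, norm_inv, norm_inv, hxn, hyn]
    simpa [← norm_sub_rev] using norm_pow_sub_pow y x hy.le hx.le (n+1)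

lemma norm_expand_pow (w : ℚ_[p]) (hw : ‖w‖ < 1) (n : ℕ) :
    ‖(1 + w) ^ n - 1 - n * w‖ ≤ ‖w‖ ^ 2 := by
  induction n with
  | zero => simpa using sq_nonneg ‖w‖
  | succ n ih =>
    have hww : ‖w‖ ≤ 1 := hw.le
    have key : (1 + w) ^ (n+1) - 1 - (n+1 : ℕ) * w =
        ((1 + w) ^ n - 1 - n * w) * (1 + w) + (n : ℚ_[p]) * w ^ 2 := by
      push_cast; ring
    rw [key]
    refine (Padic.nonarchimedean _ _).trans (max_le ?_ ?_)
    · rw [norm_mul]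
      have h1 : ‖(1 : ℚ_[p]) + w‖ ≤ 1 :=
        (Padic.nonarchimedean _ _).trans (by simp [hww])
      calc ‖(1+w)^n - 1 - n*w‖ * ‖1 + w‖ ≤ ‖w‖^2 * 1 := by gcongr
        _ = ‖w‖^2 := mul_one _
    · rw [norm_mul, norm_pow]
      calc ‖(n : ℚ_[p])‖ * ‖w‖^2 ≤ 1 * ‖w‖^2 := by
            gcongr; exact_mod_cast Padic.norm_int_le_one (p := p) (n : ℤ)
        _ = ‖w‖^2 := one_mul _

lemma norm_one_add_sub_le (w : ℚ_[p]) (hw : ‖w‖ < 1) (n : ℕ) :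
    ‖(1 + w) ^ n - 1‖ ≤ ‖w‖ := by
  have h := norm_expand_pow w hw n
  have : (1 + w) ^ n - 1 = ((1 + w) ^ n - 1 - n * w) + n * w := by ring
  rw [this]
  refine (Padic.nonarchimedean _ _).trans (max_le ?_ ?_)
  · exact h.trans (by nlinarith [norm_nonneg w])
  · rw [norm_mul]
    calc ‖(n : ℚ_[p])‖ * ‖w‖ ≤ 1 * ‖w‖ := by
          gcongr; exact_mod_cast Padic.norm_int_le_one (p := p) (n : ℤ)
      _ = ‖w‖ := one_mul _

lemma norm_one_add_eq_one (w : ℚ_[p]) (hw : ‖w‖ < 1) : ‖1 + w‖ = 1 := by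
  refine le_antisymm ((Padic.nonarchimedean _ _).trans (by simp [hw.le])) ?_
  by_contra hlt
  push_neg at hlt
  have : (1:ℝ) = ‖(1 + w) + (-w)‖ := by norm_num
  have h2 := (Padic.nonarchimedean (1 + w) (-w)).trans_lt
    (max_lt hlt (by simpa using hw))
  rw [← this] at h2
  exact absurd h2 (by norm_num)

lemma norm_expand_zpow (w : ℚ_[p]) (hw : ‖w‖ < 1) (t : ℤ) :
    ‖(1 + w) ^ t - 1 - t * w‖ ≤ ‖w‖ ^ 2 := by
  have hx : ‖(1:ℚ_[p]) + w‖ = 1 := norm_one_add_eq_one w hw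
  have hx0 : (1:ℚ_[p]) + w ≠ 0 := by intro h; rw [h] at hx; simp at hx
  rcases t with n | n
  · simpa using norm_expand_pow w hw n
  · set m := n + 1
    rw [zpow_negSucc]
    have hxm : ‖(1 + w) ^ m‖ = 1 := by rw [norm_pow, hx, one_pow]
    have hxm0 : (1 + w) ^ m ≠ 0 := pow_ne_zero _ hx0
    have key : ((1 + w) ^ m)⁻¹ - 1 - (Int.negSucc n) * w =
        (-( (1+w)^m - 1 - (m:ℚ_[p]) * w) + (m:ℚ_[p]) * w * ((1+w)^m - 1)) * ((1+w)^m)⁻¹ := by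
      rw [Int.cast_negSucc]
      field_simp
      push_cast
      simp only [m]; push_cast; ring
    rw [key, norm_mul, norm_inv, hxm, inv_one, mul_one]
    refine (Padic.nonarchimedean _ _).trans (max_le ?_ ?_)
    · rw [norm_neg]; exact norm_expand_pow w hw m
    · rw [norm_mul, norm_mul]
      have h1 : ‖((m:ℕ) : ℚ_[p])‖ ≤ 1 := by exact_mod_cast Padic.norm_int_le_one (p := p) (m : ℤ)
      calc ‖((m:ℕ):ℚ_[p])‖ * ‖w‖ * ‖(1+w)^m - 1‖ ≤ 1 * ‖w‖ * ‖w‖ := by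
            gcongr; exact norm_one_add_sub_le w hw m
        _ = ‖w‖ ^ 2 := by ring

lemma norm_nat_eq_one {u : ℕ} (h : ¬ p ∣ u) : ‖(u : ℚ_[p])‖ = 1 := by
  have h1 := Padic.norm_int_le_one (p := p) (u : ℤ)
  have h2 := (Padic.norm_intCast_lt_one_iff (p := p) (k := (u : ℤ))).not.mpr
    (by exact_mod_cast h)
  push_cast at h1 h2 ⊢
  exact le_antisymm h1 (not_lt.mp h2)

noncomputable def unitSum (p : ℕ) [Fact p.Prime] (t : ℤ) (s : ℕ) : ℚ_[p] :=
  ∑ u ∈ (range (p ^ s)).filter (fun u => ¬ p ∣ u), (u : ℚ_[p]) ^ t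

lemma unitSum_reindex (t : ℤ) (s : ℕ) (hs : 1 ≤ s) :
    unitSum p t (s + 1) =
      ∑ v ∈ (range (p ^ s)).filter (fun u => ¬ p ∣ u), ∑ j ∈ range p,
        ((v + p ^ s * j : ℕ) : ℚ_[p]) ^ t := by
  have hp0 : 0 < p := (Fact.out : p.Prime).pos
  have hps : 0 < p ^ s := pow_pos hp0 s
  have key : unitSum p t (s+1) =
      ∑ x ∈ ((range (p ^ s)).filter (fun u => ¬ p ∣ u)) ×ˢ range p,
        ((x.1 + p ^ s * x.2 : ℕ) : ℚ_[p]) ^ t := by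
    rw [unitSum]
    refine Finset.sum_nbij' (fun u => (u % p ^ s, u / p ^ s))
      (fun x => x.1 + p ^ s * x.2) ?_ ?_ ?_ ?_ ?_
    · intro u hu
      simp only [mem_filter, mem_range, mem_product] at hu ⊢
      obtain ⟨hu1, hu2⟩ := hu
      refine ⟨⟨Nat.mod_lt _ hps, ?_⟩, ?_⟩
      · intro hd
        exact hu2 ((Nat.dvd_mod_iff (dvd_pow_self p (by omega))).mp hd)
      · rw [Nat.div_lt_iff_lt_mul hps]
        calc u < p ^ (s+1) := hu1
          _ = p * p ^ s := by rw [pow_succ, mul_comm]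
    · intro x hx
      simp only [mem_filter, mem_range, mem_product] at hx ⊢
      obtain ⟨⟨hx1, hx2⟩, hx3⟩ := hx
      constructor
      · calc x.1 + p ^ s * x.2 ≤ (p ^ s - 1) + p ^ s * (p - 1) := by
              refine Nat.add_le_add (by omega) (Nat.mul_le_mul_left _ (by omega))
          _ < p ^ (s + 1) := by
              rw [pow_succ]
              have h1 : 1 ≤ p ^ s := hps
              have h4 : p ^ s * (p - 1) = p ^ s * p - p ^ s := by
                rw [Nat.mul_sub, Nat.mul_one]
              have h5 : p ^ s ≤ p ^ s * p := Nat.le_mul_of_pos_right _ hp0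
              omega
      · intro hd
        have hdp : p ∣ p ^ s * x.2 := (dvd_pow_self p (by omega)).mul_right _
        exact hx2 ((Nat.dvd_add_right hdp).mp (by rwa [Nat.add_comm] at hd))
    · intro u hu
      exact Nat.mod_add_div u (p ^ s)
    · intro x hx
      simp only [mem_filter, mem_range, mem_product] at hx
      obtain ⟨⟨hx1, hx2⟩, hx3⟩ := hx
      have h1 : (x.1 + p ^ s * x.2) % p ^ s = x.1 := by
        rw [Nat.add_mul_mod_self_left, Nat.mod_eq_of_lt hx1]
      have h2 : (x.1 + p ^ s * x.2) / p ^ s = x.2 := by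
        rw [Nat.add_mul_div_left _ _ hps, Nat.div_eq_of_lt hx1, Nat.zero_add]
      exact Prod.ext h1 h2
    · intro u hu
      simp only
      rw [Nat.mod_add_div u (p ^ s)]
  rw [key, Finset.sum_product]


lemma inner_est (t : ℤ) (s : ℕ) (hs : 1 ≤ s) (v j : ℕ) (hv : ¬ p ∣ v) :
    ‖((v + p ^ s * j : ℕ) : ℚ_[p]) ^ t -
      ((v : ℚ_[p]) ^ t + t * j * (p : ℚ_[p]) ^ s * (v : ℚ_[p]) ^ (t - 1))‖
      ≤ (p : ℝ) ^ (-(2 * s : ℤ)) := by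
  have hp1 : (1 : ℝ) < p := by exact_mod_cast (Fact.out : p.Prime).one_lt
  have hV : ‖(v : ℚ_[p])‖ = 1 := norm_nat_eq_one hv
  have hV0 : (v : ℚ_[p]) ≠ 0 := by intro h; rw [h] at hV; simp at hV
  set w : ℚ_[p] := (p : ℚ_[p]) ^ s * j / v with hw_def
  have hwle : ‖w‖ ≤ (p : ℝ) ^ (-s : ℤ) := by
    rw [hw_def, norm_div, norm_mul, hV, div_one, Padic.norm_p_pow]
    calc (p:ℝ) ^ (-s:ℤ) * ‖(j : ℚ_[p])‖ ≤ (p:ℝ) ^ (-s:ℤ) * 1 := by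
          refine mul_le_mul_of_nonneg_left ?_ (by positivity)
          exact_mod_cast Padic.norm_int_le_one (p := p) (j : ℤ)
      _ = (p:ℝ) ^ (-s:ℤ) := mul_one _
  have hwlt : ‖w‖ < 1 := by
    refine hwle.trans_lt ?_
    exact zpow_lt_one_of_neg₀ hp1 (by omega)
  have hcast : ((v + p ^ s * j : ℕ) : ℚ_[p]) = (v : ℚ_[p]) * (1 + w) := by
    rw [hw_def]
    push_cast
    field_simp
  have hfac : ((v + p ^ s * j : ℕ) : ℚ_[p]) ^ t -
      ((v : ℚ_[p]) ^ t + t * j * (p : ℚ_[p]) ^ s * (v : ℚ_[p]) ^ (t - 1)) =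
      (v : ℚ_[p]) ^ t * ((1 + w) ^ t - 1 - t * w) := by
    rw [hcast, mul_zpow, zpow_sub_one₀ hV0, hw_def]
    field_simp
    ring
  rw [hfac, norm_mul, norm_zpow, hV, one_zpow, one_mul]
  calc ‖(1 + w) ^ t - 1 - t * w‖ ≤ ‖w‖ ^ 2 := norm_expand_zpow w hwlt t
    _ ≤ ((p:ℝ) ^ (-s:ℤ)) ^ 2 := by
        refine pow_le_pow_left₀ (norm_nonneg _) hwle 2
    _ = (p:ℝ) ^ (-(2 * s : ℤ)) := by
        rw [← zpow_natCast ((p:ℝ) ^ (-s:ℤ)), ← zpow_mul]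
        norm_num
        ring_nf


lemma unitSum_step (t : ℤ) (s : ℕ) (hs : 1 ≤ s) :
    ‖unitSum p t (s + 1) - p * unitSum p t s
      - t * (∑ j ∈ range p, (j : ℚ_[p])) * (p : ℚ_[p]) ^ s * unitSum p (t - 1) s‖
      ≤ (p : ℝ) ^ (-(2 * s : ℤ)) := by
  have key : unitSum p t (s + 1) - p * unitSum p t s
      - t * (∑ j ∈ range p, (j : ℚ_[p])) * (p : ℚ_[p]) ^ s * unitSum p (t - 1) s
      = ∑ v ∈ (range (p ^ s)).filter (fun u => ¬ p ∣ u), ∑ j ∈ range p,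
          (((v + p ^ s * j : ℕ) : ℚ_[p]) ^ t -
            ((v : ℚ_[p]) ^ t + t * j * (p : ℚ_[p]) ^ s * (v : ℚ_[p]) ^ (t - 1))) := by
    rw [unitSum_reindex t s hs, unitSum, unitSum, Finset.mul_sum, Finset.mul_sum,
      ← Finset.sum_sub_distrib, ← Finset.sum_sub_distrib]
    refine Finset.sum_congr rfl fun v hv => ?_
    rw [Finset.sum_sub_distrib, Finset.sum_add_distrib]
    have h1 : ∑ _j ∈ range p, (v : ℚ_[p]) ^ t = p * (v : ℚ_[p]) ^ t := by
      rw [Finset.sum_const, card_range, nsmul_eq_mul]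
    have h2 : ∑ j ∈ range p, (t : ℚ_[p]) * j * (p : ℚ_[p]) ^ s * (v : ℚ_[p]) ^ (t - 1)
        = t * (∑ j ∈ range p, (j : ℚ_[p])) * (p : ℚ_[p]) ^ s * (v : ℚ_[p]) ^ (t - 1) := by
      rw [← Finset.sum_mul, ← Finset.sum_mul, ← Finset.mul_sum]
    rw [h1, h2]
    ring
  rw [key]
  have hC : (0:ℝ) ≤ (p : ℝ) ^ (-(2 * s : ℤ)) := by positivity
  refine IsUltrametricDist.norm_sum_le_of_forall_le_of_nonneg hC fun v hv => ?_
  refine IsUltrametricDist.norm_sum_le_of_forall_le_of_nonneg hC fun j hj => ?_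
  simp only [mem_filter] at hv
  exact inner_est t s hs v j hv.2


lemma norm_unitSum_le_one (t : ℤ) (s : ℕ) : ‖unitSum p t s‖ ≤ 1 := by
  refine IsUltrametricDist.norm_sum_le_of_forall_le_of_nonneg zero_le_one fun u hu => ?_
  simp only [mem_filter] at hu
  rw [norm_zpow, norm_nat_eq_one hu.2, one_zpow]

lemma norm_gauss_le_one : ‖∑ j ∈ range p, (j : ℚ_[p])‖ ≤ 1 := by
  refine IsUltrametricDist.norm_sum_le_of_forall_le_of_nonneg zero_le_one fun u hu => ?_
  exact_mod_cast Padic.norm_int_le_one (p := p) (u : ℤ)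

lemma norm_gauss_odd (hp : p ≠ 2) : ‖∑ j ∈ range p, (j : ℚ_[p])‖ ≤ (p : ℝ) ^ (-1 : ℤ) := by
  have key : (∑ j ∈ range p, (j : ℚ_[p])) * 2 = ((p * (p - 1) : ℕ) : ℚ_[p]) := by
    have h := Finset.sum_range_id_mul_two p
    have h2 : (((∑ i ∈ range p, i) * 2 : ℕ) : ℚ_[p]) = ((p * (p - 1) : ℕ) : ℚ_[p]) := by
      exact_mod_cast congrArg (fun n : ℕ => (n : ℚ_[p])) h
    push_cast at h2 ⊢
    convert h2 using 2
  have h2norm : ‖(2 : ℚ_[p])‖ = 1 := by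
    have : ¬ p ∣ 2 := fun hd =>
      hp (((Nat.prime_dvd_prime_iff_eq Fact.out Nat.prime_two).mp hd))
    simpa using norm_nat_eq_one this
  have hdvd : ‖((p * (p - 1) : ℕ) : ℚ_[p])‖ ≤ (p : ℝ) ^ (-(1:ℕ) : ℤ) := by
    rw [show (((p * (p - 1) : ℕ)) : ℚ_[p]) = (((p * (p - 1) : ℕ) : ℤ) : ℚ_[p]) by push_cast; ring]
    rw [Padic.norm_int_le_pow_iff_dvd]
    push_cast
    rw [pow_one]
    exact dvd_mul_right _ _
  calc ‖∑ j ∈ range p, (j : ℚ_[p])‖ = ‖(∑ j ∈ range p, (j : ℚ_[p])) * 2‖ := by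
        rw [norm_mul, h2norm, mul_one]
    _ = ‖((p * (p - 1) : ℕ) : ℚ_[p])‖ := by rw [key]
    _ ≤ (p : ℝ) ^ (-1 : ℤ) := by exact_mod_cast hdvd

lemma unitSum_induction_step (t : ℤ) (s : ℕ) (hs : 1 ≤ s) (γ B : ℝ)
    (hγ : ‖∑ j ∈ range p, (j : ℚ_[p])‖ ≤ γ) (hγ1 : γ ≤ 1)
    (hB : ‖unitSum p t s‖ ≤ B) :
    ‖unitSum p t (s + 1)‖ ≤
      max ((p : ℝ) ^ (-(2 * s : ℤ))) (max ((p : ℝ) ^ (-1:ℤ) * B) (γ * (p : ℝ) ^ (-(s:ℤ)))) := by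
  have hp1 : (1 : ℝ) ≤ p := by exact_mod_cast (Fact.out : p.Prime).one_lt.le
  set M : ℚ_[p] := t * (∑ j ∈ range p, (j : ℚ_[p])) * (p : ℚ_[p]) ^ s * unitSum p (t - 1) s
    with hM
  have hsplit : unitSum p t (s + 1) =
      (unitSum p t (s + 1) - p * unitSum p t s - M) + ((p : ℚ_[p]) * unitSum p t s + M) := by
    ring
  rw [hsplit]
  refine (Padic.nonarchimedean _ _).trans (max_le_max (unitSum_step t s hs) ?_)
  refine (Padic.nonarchimedean _ _).trans (max_le_max ?_ ?_)
  · rw [norm_mul, Padic.norm_p]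
    have : ((p:ℝ))⁻¹ = (p : ℝ) ^ (-1 : ℤ) := by
      rw [zpow_neg, zpow_one]
    rw [this]
    gcongr
  · rw [hM, norm_mul, norm_mul, norm_mul, Padic.norm_p_pow]
    have ht1 : ‖(t : ℚ_[p])‖ ≤ 1 := Padic.norm_int_le_one _
    have hS1 := norm_unitSum_le_one (p := p) (t - 1) s
    calc ‖(t:ℚ_[p])‖ * ‖∑ j ∈ range p, (j : ℚ_[p])‖ * (p:ℝ)^(-(s:ℤ)) * ‖unitSum p (t-1) s‖
        ≤ 1 * γ * (p:ℝ)^(-(s:ℤ)) * 1 := by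
          have h0 : (0:ℝ) ≤ γ := (norm_nonneg _).trans hγ
          gcongr
      _ = γ * (p:ℝ)^(-(s:ℤ)) := by ring

lemma norm_unitSum_weak (t : ℤ) (s : ℕ) (hs : 1 ≤ s) :
    ‖unitSum p t s‖ ≤ (p : ℝ) ^ (1 - (s:ℤ)) := by
  have hp1 : (1 : ℝ) ≤ p := by exact_mod_cast (Fact.out : p.Prime).one_lt.le
  have hp0 : (p : ℝ) ≠ 0 := by positivity
  induction s, hs using Nat.le_induction with
  | base => simpa using norm_unitSum_le_one t 1
  | succ s hs ih =>
    refine (unitSum_induction_step t s hs 1 _ norm_gauss_le_one le_rfl ih).trans ?_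
    have e1 : (p:ℝ) ^ (-1:ℤ) * (p:ℝ) ^ (1 - (s:ℤ)) = (p:ℝ) ^ (-(s:ℤ)) := by
      rw [← zpow_add₀ hp0]; ring_nf
    have e2 : (1 : ℤ) - (s + 1 : ℕ) = -(s:ℤ) := by push_cast; ring
    rw [e1, e2, one_mul]
    refine max_le ?_ (max_le le_rfl le_rfl)
    exact zpow_le_zpow_right₀ hp1 (by omega)

lemma norm_unitSum_strong (t : ℤ) (hbase : ‖unitSum p t 1‖ ≤ (p : ℝ) ^ (-1 : ℤ))
    (hodd : p ≠ 2) (s : ℕ) (hs : 1 ≤ s) :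
    ‖unitSum p t s‖ ≤ (p : ℝ) ^ (-(s:ℤ)) := by
  have hp1 : (1 : ℝ) ≤ p := by exact_mod_cast (Fact.out : p.Prime).one_lt.le
  have hp0 : (p : ℝ) ≠ 0 := by positivity
  induction s, hs using Nat.le_induction with
  | base => simpa using hbase
  | succ s hs ih =>
    refine (unitSum_induction_step t s hs ((p:ℝ) ^ (-1:ℤ)) _ (norm_gauss_odd hodd)
      (by rw [zpow_neg, zpow_one]; exact inv_le_one_of_one_le₀ hp1) ih).trans ?_
    have e1 : (p:ℝ) ^ (-1:ℤ) * (p:ℝ) ^ (-(s:ℤ)) = (p:ℝ) ^ (-((s:ℤ)+1)) := by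
      rw [← zpow_add₀ hp0]; ring_nf
    have e2 : (-((s+1:ℕ)):ℤ) = -((s:ℤ)+1) := by push_cast; ring
    rw [e1, e2]
    refine max_le ?_ (max_le le_rfl le_rfl)
    exact zpow_le_zpow_right₀ hp1 (by omega)


lemma norm_unitSum_base (t : ℤ) (ht : ¬ ((p : ℤ) - 1 ∣ t)) :
    ‖unitSum p t 1‖ ≤ (p : ℝ) ^ (-1 : ℤ) := by
  have hp := (Fact.out : p.Prime)
  have hp0 : 0 < p := hp.pos
  -- get a generator of the units
  obtain ⟨g, hg⟩ := IsCyclic.exists_generator (α := (ZMod p)ˣ)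
  have horder : orderOf g = p - 1 := by
    rw [orderOf_eq_card_of_forall_mem_zpowers hg, Nat.card_eq_fintype_card,
      ZMod.card_units_eq_totient, Nat.totient_prime hp]
  -- t.natAbs is not divisible by p - 1
  have hnat : ¬ (p - 1) ∣ t.natAbs := by
    intro hd
    apply ht
    have : ((p - 1 : ℕ) : ℤ) ∣ (t.natAbs : ℤ) := Int.natCast_dvd_natCast.mpr hd
    rw [Int.dvd_natAbs] at this
    have hcast : ((p - 1 : ℕ) : ℤ) = (p : ℤ) - 1 := by
      have : 1 ≤ p := hp0
      push_cast [this]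
      ring
    rwa [hcast] at this
  set m := t.natAbs with hm
  have hgm : g ^ m ≠ 1 := by
    intro h
    exact hnat (horder ▸ orderOf_dvd_of_pow_eq_one h)
  set c : ℕ := (g : ZMod p).val with hc
  have hcast : ((c : ℕ) : ZMod p) = (g : ZMod p) := by
    rw [hc, ZMod.natCast_val, ZMod.cast_id]
  have hcdvd : ¬ p ∣ c := by
    intro hd
    have := (ZMod.natCast_eq_zero_iff c p).mpr hd
    rw [hcast] at this
    exact g.ne_zero this
  -- ‖c^m - 1‖ = 1
  have hcm : ¬ (p : ℤ) ∣ ((c : ℤ) ^ m - 1) := by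
    intro hd
    have h0 : (((c : ℤ) ^ m - 1 : ℤ) : ZMod p) = 0 :=
      (ZMod.intCast_zmod_eq_zero_iff_dvd _ p).mpr hd
    push_cast at h0
    rw [hcast] at h0
    have : (g : ZMod p) ^ m = 1 := by linear_combination h0
    exact hgm (Units.ext (by push_cast; simpa using this))
  have hnormm : ‖(c : ℚ_[p]) ^ m - 1‖ = 1 := by
    have hle : ‖(c : ℚ_[p]) ^ m - 1‖ ≤ 1 := by
      have h1 : ‖(c : ℚ_[p]) ^ m‖ ≤ 1 := by rw [norm_pow, norm_nat_eq_one hcdvd, one_pow]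
      have h2 : (c:ℚ_[p])^m - 1 = (c:ℚ_[p])^m + (-1) := by ring
      rw [h2]
      exact (Padic.nonarchimedean _ _).trans (max_le h1 (by simp))
    refine le_antisymm hle (not_lt.mp ?_)
    intro hlt
    apply hcm
    rw [← Padic.norm_intCast_lt_one_iff]
    push_cast
    exact hlt
  have hC : ‖(c : ℚ_[p])‖ = 1 := norm_nat_eq_one hcdvd
  have hC0 : (c : ℚ_[p]) ≠ 0 := by intro h; rw [h] at hC; simp at hC
  have hnormt : ‖(c : ℚ_[p]) ^ t - 1‖ = 1 := by
    rcases Int.natAbs_eq t with h | h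
    · rw [h, zpow_natCast, hnormm]
    · rw [h, zpow_neg, zpow_natCast]
      have hx : ((c:ℚ_[p]) ^ m)⁻¹ - 1 = (1 - (c:ℚ_[p])^m) * ((c:ℚ_[p])^m)⁻¹ := by
        field_simp
      rw [hx, norm_mul, norm_inv, norm_pow, hC, one_pow, inv_one, mul_one,
        norm_sub_rev, hnormm]
  -- the inverse unit
  set d : ℕ := ((g⁻¹ : (ZMod p)ˣ) : ZMod p).val with hd
  have hdcast : ((d : ℕ) : ZMod p) = ((g⁻¹ : (ZMod p)ˣ) : ZMod p) := by
    rw [hd, ZMod.natCast_val, ZMod.cast_id]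
  have hddvd : ¬ p ∣ d := by
    intro hdv
    have := (ZMod.natCast_eq_zero_iff d p).mpr hdv
    rw [hdcast] at this
    exact (g⁻¹).ne_zero this
  set A := (range (p ^ 1)).filter (fun u => ¬ p ∣ u) with hA
  have hmemA : ∀ e : ℕ, ¬ p ∣ e → ∀ u ∈ A, (e * u) % p ∈ A := by
    intro e he u hu
    rw [hA, mem_filter, mem_range, pow_one] at hu ⊢
    refine ⟨Nat.mod_lt _ hp0, fun hdvd => ?_⟩
    rcases hp.dvd_mul.mp ((Nat.dvd_mod_iff dvd_rfl).mp hdvd) with h | h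
    · exact he h
    · exact hu.2 h
  have hcd : ((d * c : ℕ) : ZMod p) = 1 := by
    push_cast
    rw [hcast, hdcast]
    exact g.inv_mul
  have hdc : ((c * d : ℕ) : ZMod p) = 1 := by
    push_cast
    rw [hcast, hdcast]
    exact g.mul_inv
  have hinv : ∀ (e f : ℕ), ((f * e : ℕ) : ZMod p) = 1 → ∀ u ∈ A, (f * ((e * u) % p)) % p = u := by
    intro e f hef u hu
    rw [hA, mem_filter, mem_range, pow_one] at hu
    have h1 : (f * ((e * u) % p)) % p = (((f * ((e * u) % p) : ℕ)) : ZMod p).val :=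
      (ZMod.val_natCast _ _).symm
    have h2 : (((f * ((e * u) % p) : ℕ)) : ZMod p) = (u : ZMod p) := by
      push_cast [ZMod.natCast_mod]
      have : ((f : ZMod p) * (e : ZMod p)) * (u : ZMod p) = 1 * u := by
        rw [show ((f : ZMod p) * (e : ZMod p)) = ((f * e : ℕ) : ZMod p) by push_cast; ring, hef]
      rw [← mul_assoc, this, one_mul]
    rw [h1, h2, ZMod.val_natCast, Nat.mod_eq_of_lt hu.1]
  have hperm : ∑ u ∈ A, (((c * u) % p : ℕ) : ℚ_[p]) ^ t = unitSum p t 1 := by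
    rw [unitSum, ← hA]
    exact Finset.sum_nbij' (fun u => (c * u) % p) (fun u => (d * u) % p)
      (hmemA c hcdvd) (hmemA d hddvd) (hinv c d hcd) (hinv d c hdc)
      (fun u hu => rfl)
  have hkey : ‖unitSum p t 1 - (c : ℚ_[p]) ^ t * unitSum p t 1‖ ≤ (p : ℝ) ^ (-1 : ℤ) := by
    have hrw : unitSum p t 1 - (c : ℚ_[p]) ^ t * unitSum p t 1
        = ∑ u ∈ A, ((((c * u) % p : ℕ) : ℚ_[p]) ^ t - (c : ℚ_[p]) ^ t * (u : ℚ_[p]) ^ t) := by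
      rw [Finset.sum_sub_distrib, hperm, ← Finset.mul_sum]
      rw [unitSum, ← hA]
    rw [hrw]
    refine IsUltrametricDist.norm_sum_le_of_forall_le_of_nonneg (by positivity) fun u hu => ?_
    rw [hA, mem_filter] at hu
    have hu2 := hu.2
    have hcu : ¬ p ∣ c * u := fun hdvd => by
      rcases hp.dvd_mul.mp hdvd with h | h
      · exact hcdvd h
      · exact hu2 h
    have hcum : ¬ p ∣ (c * u) % p := fun hdvd => hcu ((Nat.dvd_mod_iff dvd_rfl).mp hdvd)
    have heq : (c : ℚ_[p]) ^ t * (u : ℚ_[p]) ^ t = ((c * u : ℕ) : ℚ_[p]) ^ t := by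
      push_cast
      rw [mul_zpow]
    rw [heq]
    refine (norm_zpow_sub_zpow _ _ (norm_nat_eq_one hcum) (norm_nat_eq_one hcu) t).trans ?_
    have hsub : (((c * u) % p : ℕ) : ℚ_[p]) - ((c * u : ℕ) : ℚ_[p])
        = (((((c * u) % p : ℕ) : ℤ) - ((c * u : ℕ) : ℤ) : ℤ) : ℚ_[p]) := by
      rw [Int.cast_sub, Int.cast_natCast, Int.cast_natCast]
    rw [hsub]
    have hmod' : (((c * u) % p : ℕ) : ℤ) + (p : ℤ) * (((c * u) / p : ℕ) : ℤ)
        = ((c * u : ℕ) : ℤ) := by exact_mod_cast congrArg (fun n : ℕ => (n : ℤ)) (Nat.mod_add_div (c * u) p)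
    have hdvd : ((p : ℤ) ^ 1) ∣ ((((c * u) % p : ℕ) : ℤ) - ((c * u : ℕ) : ℤ)) := by
      refine ⟨-(((c * u) / p : ℕ) : ℤ), ?_⟩
      rw [pow_one]
      linear_combination hmod'
    exact_mod_cast (Padic.norm_int_le_pow_iff_dvd _ 1).mpr hdvd
  have h1 : ‖1 - (c : ℚ_[p]) ^ t‖ = 1 := by rw [norm_sub_rev]; exact hnormt
  calc ‖unitSum p t 1‖ = ‖(1 - (c : ℚ_[p]) ^ t) * unitSum p t 1‖ := by
        rw [norm_mul, h1, one_mul]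
    _ = ‖unitSum p t 1 - (c : ℚ_[p]) ^ t * unitSum p t 1‖ := congrArg norm (by ring)
    _ ≤ (p : ℝ) ^ (-1 : ℤ) := hkey


lemma norm_unitSum_two (t : ℤ) (ht : Odd t) (s : ℕ) (hs : 2 ≤ s) (hp2 : p = 2) :
    ‖unitSum p t s‖ ≤ (p : ℝ) ^ (-(s : ℤ)) := by
  subst hp2
  have h2 : (2:ℕ).Prime := Nat.prime_two
  have hslt : 2 ^ (s-1) < 2 ^ s := Nat.pow_lt_pow_right one_lt_two (by omega)
  have hm12 : 2 ^ (s-1) * 2 = 2 ^ s := by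
    rw [← pow_succ]
    congr 1
    omega
  set A := (range (2 ^ s)).filter (fun u => ¬ 2 ∣ u) with hA
  set B := (range (2 ^ (s-1))).filter (fun u => ¬ 2 ∣ u) with hB
  -- split the sum
  have hsplit : unitSum 2 t s
      = (∑ u ∈ B, (u : ℚ_[2]) ^ t) + ∑ u ∈ A.filter (fun u => ¬ u < 2 ^ (s-1)), (u : ℚ_[2]) ^ t := by
    rw [unitSum, ← hA, ← Finset.sum_filter_add_sum_filter_not A (fun u => u < 2 ^ (s-1))]
    congr 1
    congr 1
    rw [hA, hB]
    ext u
    simp only [mem_filter, mem_range]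
    constructor
    · rintro ⟨⟨h1, h2⟩, h3⟩; exact ⟨h3, h2⟩
    · rintro ⟨h1, h2⟩; exact ⟨⟨h1.trans hslt, h2⟩, h1⟩
  -- reindex the upper half by u ↦ 2^s - u
  have hupper : ∑ u ∈ A.filter (fun u => ¬ u < 2 ^ (s-1)), (u : ℚ_[2]) ^ t
      = ∑ u ∈ B, ((2 ^ s - u : ℕ) : ℚ_[2]) ^ t := by
    refine Finset.sum_nbij' (fun u => 2 ^ s - u) (fun u => 2 ^ s - u) ?_ ?_ ?_ ?_ ?_
    · intro u hu
      simp only [hA, hB, mem_filter, mem_range] at hu ⊢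
      obtain ⟨⟨h1, h2⟩, h3⟩ := hu
      have hne : u ≠ 2 ^ (s-1) := by
        intro h
        exact h2 (h ▸ dvd_pow_self 2 (by omega))
      refine ⟨by omega, fun hd => h2 ?_⟩
      have : 2 ∣ 2 ^ s := dvd_pow_self 2 (by omega)
      omega
    · intro u hu
      simp only [hA, hB, mem_filter, mem_range] at hu ⊢
      obtain ⟨h1, h2⟩ := hu
      have hu1 : 1 ≤ u := by
        rcases Nat.eq_zero_or_pos u with h | h
        · exact absurd (h ▸ dvd_zero 2) h2
        · exact h
      have : 2 ∣ 2 ^ s := dvd_pow_self 2 (by omega)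
      refine ⟨⟨by omega, fun hd => h2 (by omega)⟩, by omega⟩
    · intro u hu
      simp only [hA, mem_filter, mem_range] at hu
      show 2 ^ s - (2 ^ s - u) = u
      omega
    · intro u hu
      simp only [hB, mem_filter, mem_range] at hu
      show 2 ^ s - (2 ^ s - u) = u
      have := hu.1.trans hslt
      omega
    · intro u hu
      simp only [hA, mem_filter, mem_range] at hu
      have hle : u ≤ 2 ^ s := le_of_lt hu.1.1
      show (u : ℚ_[2]) ^ t = ((2 ^ s - (2 ^ s - u) : ℕ) : ℚ_[2]) ^ t
      rw [Nat.sub_sub_self hle]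
  rw [hsplit, hupper, ← Finset.sum_add_distrib]
  refine IsUltrametricDist.norm_sum_le_of_forall_le_of_nonneg (by positivity) fun u hu => ?_
  simp only [hB, mem_filter, mem_range] at hu
  obtain ⟨hu1, hu2⟩ := hu
  have hule : u ≤ 2 ^ s := by omega
  have hodd2 : ¬ 2 ∣ (2 ^ s - u) := by
    have : 2 ∣ 2 ^ s := dvd_pow_self 2 (by omega)
    omega
  have hx : ‖((2 ^ s - u : ℕ) : ℚ_[2])‖ = 1 := norm_nat_eq_one hodd2
  have hy : ‖(-(u : ℚ_[2]))‖ = 1 := by rw [norm_neg]; exact norm_nat_eq_one hu2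
  have hyt : (-(u : ℚ_[2])) ^ t = -((u : ℚ_[2]) ^ t) := ht.neg_zpow _
  have hkey := norm_zpow_sub_zpow ((2 ^ s - u : ℕ) : ℚ_[2]) (-(u : ℚ_[2])) hx hy t
  rw [hyt] at hkey
  have hdiff : ((2 ^ s - u : ℕ) : ℚ_[2]) - (-(u : ℚ_[2])) = ((2:ℚ_[2]) ^ s) := by
    push_cast [Nat.cast_sub hule]
    ring
  rw [hdiff] at hkey
  have hnorm2 : ‖((2:ℚ_[2]) ^ s)‖ = ((2:ℕ) : ℝ) ^ (-(s:ℤ)) := by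
    have := Padic.norm_p_pow (p := 2) s
    push_cast at this ⊢
    exact this
  calc ‖(u : ℚ_[2]) ^ t + ((2 ^ s - u : ℕ) : ℚ_[2]) ^ t‖
      = ‖((2 ^ s - u : ℕ) : ℚ_[2]) ^ t - (-((u : ℚ_[2]) ^ t))‖ := congrArg norm (by ring)
    _ ≤ ‖((2:ℚ_[2]) ^ s)‖ := hkey
    _ = ((2:ℕ) : ℝ) ^ (-(s:ℤ)) := hnorm2


noncomputable def F (p : ℕ) [Fact p.Prime] (t : ℤ) (k : ℕ) : ℚ_[p] :=
  if ¬ p ∣ k then (k : ℚ_[p]) ^ t else 0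

lemma norm_F_le_one (t : ℤ) (k : ℕ) : ‖F p t k‖ ≤ 1 := by
  rw [F]
  split_ifs with h
  · simp
  · rw [norm_zpow, norm_nat_eq_one h, one_zpow]

lemma norm_F_sub_F (t : ℤ) (s : ℕ) (hs : 1 ≤ s) (k k' : ℕ) (hk : k % p ^ s = k' % p ^ s) :
    ‖F p t k - F p t k'‖ ≤ (p : ℝ) ^ (-(s:ℤ)) := by
  have h1 : p ∣ p ^ s := dvd_pow_self p (by omega)
  have hdvd : p ∣ k ↔ p ∣ k' := by
    rw [← Nat.dvd_mod_iff h1, hk, Nat.dvd_mod_iff h1]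
  rw [F, F]
  by_cases h : p ∣ k
  · rw [if_neg (not_not_intro h), if_neg (not_not_intro (hdvd.mp h))]
    simp only [sub_zero, norm_zero]
    positivity
  · have hk'2 : ¬ p ∣ k' := fun hx => h (hdvd.mpr hx)
    rw [if_pos h, if_pos hk'2]
    refine (norm_zpow_sub_zpow _ _ (norm_nat_eq_one h) (norm_nat_eq_one hk'2) t).trans ?_
    have hd2 : ((p:ℤ) ^ s) ∣ ((k : ℤ) - (k' : ℤ)) := by
      have := Nat.ModEq.dvd (Nat.ModEq.symm (id hk : Nat.ModEq (p ^ s) k k'))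
      exact_mod_cast this
    have : ((k : ℚ_[p]) - (k' : ℚ_[p])) = (((k : ℤ) - (k' : ℤ) : ℤ) : ℚ_[p]) := by push_cast; ring
    rw [this]
    exact_mod_cast (Padic.norm_int_le_pow_iff_dvd _ s).mpr hd2

lemma block_est (t : ℤ) (s : ℕ) (hs : 1 ≤ s) (a : ℕ) :
    ‖(∑ k ∈ Ico a (a + p ^ s), F p t k) - unitSum p t s‖ ≤ (p : ℝ) ^ (-(s:ℤ)) := by
  have hp0 : 0 < p := (Fact.out : p.Prime).pos
  have hps : 1 ≤ p ^ s := Nat.one_le_pow _ _ hp0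
  induction a with
  | zero =>
    have : ∑ k ∈ Ico 0 (0 + p ^ s), F p t k = unitSum p t s := by
      rw [unitSum, Finset.sum_filter]
      rw [Nat.zero_add, ← Finset.range_eq_Ico]
      rfl
    rw [this, sub_self]
    simp only [norm_zero]
    positivity
  | succ a ih =>
    have hsplit : ∑ k ∈ Ico (a + 1) (a + 1 + p ^ s), F p t k
        = (∑ k ∈ Ico a (a + p ^ s), F p t k) - F p t a + F p t (a + p ^ s) := by
      have h1 : ∑ k ∈ Ico a (a + p ^ s), F p t k
          = F p t a + ∑ k ∈ Ico (a + 1) (a + p ^ s), F p t k :=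
        Finset.sum_eq_sum_Ico_succ_bot (by omega) _
      have h2 : ∑ k ∈ Ico (a + 1) (a + 1 + p ^ s), F p t k
          = (∑ k ∈ Ico (a + 1) (a + p ^ s), F p t k) + F p t (a + p ^ s) := by
        rw [show a + 1 + p ^ s = (a + p ^ s) + 1 by omega]
        exact Finset.sum_Ico_succ_top (by omega) _
      rw [h2, h1]
      ring
    rw [hsplit]
    have hrw : (∑ k ∈ Ico a (a + p ^ s), F p t k) - F p t a + F p t (a + p ^ s) - unitSum p t s
        = ((∑ k ∈ Ico a (a + p ^ s), F p t k) - unitSum p t s)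
          + (F p t (a + p ^ s) - F p t a) := by ring
    rw [hrw]
    refine (Padic.nonarchimedean _ _).trans (max_le ih ?_)
    exact norm_F_sub_F t s hs _ _ (by simp [Nat.add_mod])

lemma telescope_est (t : ℤ) (s : ℕ) (B : ℝ) (hB0 : 0 ≤ B)
    (hblock : ∀ a : ℕ, ‖∑ k ∈ Ico a (a + p ^ s), F p t k‖ ≤ B) (n : ℕ) (hn : 1 ≤ n) :
    ∀ m : ℕ, ‖(∑ k ∈ Ico 1 (n + m * p ^ s), F p t k) - ∑ k ∈ Ico 1 n, F p t k‖ ≤ B := by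
  intro m
  induction m with
  | zero => simpa using hB0
  | succ m ih =>
    have h1 : 1 ≤ n + m * p ^ s := by omega
    have h2 : n + (m + 1) * p ^ s = (n + m * p ^ s) + p ^ s := by ring
    have hsplit : ∑ k ∈ Ico 1 (n + (m+1) * p ^ s), F p t k
        = (∑ k ∈ Ico 1 (n + m * p ^ s), F p t k)
          + ∑ k ∈ Ico (n + m * p ^ s) ((n + m * p ^ s) + p ^ s), F p t k := by
      rw [h2]
      exact (Finset.sum_Ico_consecutive _ h1 (by omega)).symm
    rw [hsplit]
    have hrw : (∑ k ∈ Ico 1 (n + m * p ^ s), F p t k)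
          + (∑ k ∈ Ico (n + m * p ^ s) ((n + m * p ^ s) + p ^ s), F p t k)
          - ∑ k ∈ Ico 1 n, F p t k
        = ((∑ k ∈ Ico 1 (n + m * p ^ s), F p t k) - ∑ k ∈ Ico 1 n, F p t k)
          + ∑ k ∈ Ico (n + m * p ^ s) ((n + m * p ^ s) + p ^ s), F p t k := by ring
    rw [hrw]
    exact (Padic.nonarchimedean _ _).trans (max_le ih (hblock _))

end Aux

/-- `T(n) = Σ_{1 ≤ k < n, p ∤ k} k^{-(r+1)}`, computed in `ℚ_p`. -/
noncomputable def partialPolygammaSum (p : ℕ) [Fact p.Prime] (r : ℤ) (n : ℕ) : ℚ_[p] :=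
  ∑ k ∈ (Finset.Ico 1 n).filter (fun k => ¬ p ∣ k), ((k : ℚ_[p])) ^ (-(r + 1))

theorem polygamma_partial_sum_congruence
    (p : ℕ) [Fact p.Prime] (r : ℤ) (s : ℕ) (hs : 1 ≤ s)
    (n n' : ℕ) (hn : 0 < n) (hn' : 0 < n')
    (hcong : n % p ^ s = n' % p ^ s) :
    ‖partialPolygammaSum p r n - partialPolygammaSum p r n'‖ ≤ (p : ℝ) ^ (1 - (s : ℤ)) ∧
    (((3 ≤ p ∧ ¬ ((p : ℤ) - 1 ∣ (r + 1))) ∨ (p = 2 ∧ 2 ≤ s ∧ ¬ ((2 : ℤ) ∣ (r + 1)))) →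
      ‖partialPolygammaSum p r n - partialPolygammaSum p r n'‖ ≤ (p : ℝ) ^ (-(s : ℤ))) := by
  have hp1 : (1 : ℝ) ≤ p := by exact_mod_cast (Fact.out : p.Prime).one_lt.le
  set t : ℤ := -(r + 1) with ht_def
  have hT : ∀ N : ℕ, partialPolygammaSum p r N = ∑ k ∈ Ico 1 N, F p t k := by
    intro N
    rw [partialPolygammaSum, Finset.sum_filter]
    exact Finset.sum_congr rfl fun k _ => by rw [F, ht_def]
  -- wlog structure: a bound for arbitrary ordered pair
  have key : ∀ (B : ℝ), 0 ≤ B → ‖unitSum p t s‖ ≤ B → (p : ℝ) ^ (-(s:ℤ)) ≤ B →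
      ‖partialPolygammaSum p r n - partialPolygammaSum p r n'‖ ≤ B := by
    intro B hB0 hU hps
    have hblock : ∀ a : ℕ, ‖∑ k ∈ Ico a (a + p ^ s), F p t k‖ ≤ B := by
      intro a
      have h1 := block_est (p := p) t s hs a
      have : (∑ k ∈ Ico a (a + p ^ s), F p t k)
          = ((∑ k ∈ Ico a (a + p ^ s), F p t k) - unitSum p t s) + unitSum p t s := by ring
      rw [this]
      exact (Padic.nonarchimedean _ _).trans (max_le (h1.trans hps) hU)
    rcases le_total n n' with hle | hle
    · obtain ⟨m, hm⟩ := (Nat.modEq_iff_dvd' hle).mp hcong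
      have hn'eq : n' = n + m * p ^ s := by
        rw [mul_comm]
        omega
      rw [norm_sub_rev, hT, hT, hn'eq]
      exact telescope_est t s B hB0 hblock n hn m
    · obtain ⟨m, hm⟩ := (Nat.modEq_iff_dvd' hle).mp hcong.symm
      have hneq : n = n' + m * p ^ s := by
        rw [mul_comm]
        omega
      rw [hT, hT, hneq]
      exact telescope_est t s B hB0 hblock n' hn' m
  constructor
  · refine key _ (by positivity) (norm_unitSum_weak t s hs) ?_
    exact zpow_le_zpow_right₀ hp1 (by omega)
  · rintro (⟨hp3, hd⟩ | ⟨hp2, hs2, hd⟩)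
    · have hpne2 : p ≠ 2 := by omega
      have htd : ¬ ((p : ℤ) - 1 ∣ t) := by
        rw [ht_def, dvd_neg]
        exact hd
      exact key _ (by positivity)
        (norm_unitSum_strong t (norm_unitSum_base t htd) hpne2 s hs) le_rfl
    · have htodd : Odd t := by
        rw [← Int.not_even_iff_odd, even_iff_two_dvd, ht_def, dvd_neg]
        exact hd
      exact key _ (by positivity) (norm_unitSum_two t htodd s hs2 hp2) le_rfl
end

section
/- Let p be a prime and r an integer. Then: (1) ψ̃_p^{(r)}(0) = ψ̃_p^{(r)}(1) = 0; (2) for every z ∈ ℤ_p, ψ̃_p^{(r)}(z) = (−1)^r · ψ̃_p^{(r)}(1 − z); (3) for every z ∈ ℤ_p, ψ̃_p^{(r)}(z+1) − ψ̃_p^{(r)}(z) = z^{−(r+1)} if z ∈ ℤ_p^×, and ψ̃_p^{(r)}(z+1) − ψ̃_p^{(r)}(z) = 0 if z ∈ pℤ_p. -/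
open Finset Filter Topology

theorem polygamma_functional_equations
    (p : ℕ) [Fact p.Prime] (r : ℤ)
    (ψ : ℤ_[p] → ℤ_[p]) (hψcont : Continuous ψ)
    (hψ : ∀ m : ℕ, ((ψ (m : ℤ_[p]) : ℤ_[p]) : ℚ_[p]) =
      ∑ k ∈ (Finset.Ico 1 m).filter (fun k => ¬ p ∣ k), ((k : ℚ_[p])) ^ (-(r + 1))) :
    (ψ 0 = 0 ∧ ψ 1 = 0) ∧
    (∀ z : ℤ_[p], ((ψ z : ℤ_[p]) : ℚ_[p]) = (-1 : ℚ_[p]) ^ r * ((ψ (1 - z) : ℤ_[p]) : ℚ_[p])) ∧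
    (∀ z : ℤ_[p],
      (‖z‖ = 1 → ((ψ (z + 1) : ℤ_[p]) : ℚ_[p]) - ((ψ z : ℤ_[p]) : ℚ_[p])
        = ((z : ℚ_[p])) ^ (-(r + 1))) ∧
      (‖z‖ < 1 → ψ (z + 1) = ψ z)) := by
  have hcoe : Continuous (fun z : ℤ_[p] => (z : ℚ_[p])) := continuous_subtype_val
  have hinj : Function.Injective (fun z : ℤ_[p] => (z : ℚ_[p])) := Subtype.coe_injective
  -- the discrete difference equation
  have key : ∀ m : ℕ,
      (∑ k ∈ (Finset.Ico 1 (m+1)).filter (fun k => ¬ p ∣ k), ((k : ℚ_[p])) ^ (-(r + 1)))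
      = (∑ k ∈ (Finset.Ico 1 m).filter (fun k => ¬ p ∣ k), ((k : ℚ_[p])) ^ (-(r + 1)))
        + if p ∣ m then 0 else ((m : ℚ_[p])) ^ (-(r + 1)) := by
    intro m
    rcases Nat.eq_zero_or_pos m with rfl | hm
    · simp
    · rw [Finset.sum_filter, Finset.sum_filter, Finset.sum_Ico_succ_top hm,
        ← Finset.sum_filter]
      congr 1
      by_cases h : p ∣ m <;> simp [h]
  have hDelta : ∀ m : ℕ, ((ψ ((m : ℤ_[p]) + 1) : ℤ_[p]) : ℚ_[p]) =
      ((ψ (m : ℤ_[p]) : ℤ_[p]) : ℚ_[p])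
        + if p ∣ m then 0 else ((m : ℚ_[p])) ^ (-(r + 1)) := by
    intro m
    have h1 := hψ (m + 1)
    rw [Nat.cast_add, Nat.cast_one] at h1
    rw [h1, key m, ← hψ m]
  -- divisibility vs norm
  have hdvd : ∀ m : ℕ, p ∣ m ↔ ‖((m : ℕ) : ℤ_[p])‖ < 1 := by
    intro m
    rw [show ((m : ℕ) : ℤ_[p]) = ((m : ℤ) : ℤ_[p]) by push_cast; ring,
      PadicInt.norm_int_lt_one_iff_dvd, Int.natCast_dvd_natCast]
  -- sequences of naturals converging to any point
  have hseq : ∀ z : ℤ_[p], ∃ u : ℕ → ℕ, Tendsto (fun n => ((u n : ℕ) : ℤ_[p])) atTop (𝓝 z) := by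
    intro z
    have hz : z ∈ closure (Set.range (Nat.cast : ℕ → ℤ_[p])) :=
      PadicInt.denseRange_natCast z
    rw [mem_closure_iff_seq_limit] at hz
    obtain ⟨v, hv1, hv2⟩ := hz
    choose u hu using hv1
    refine ⟨u, ?_⟩
    simpa only [hu] using hv2
  have hgcont : Continuous (fun z : ℤ_[p] =>
      ((ψ (z + 1) : ℤ_[p]) : ℚ_[p]) - ((ψ z : ℤ_[p]) : ℚ_[p])) := by
    exact (hcoe.comp (hψcont.comp (continuous_id.add continuous_const))).sub
      (hcoe.comp hψcont)
  -- Part 3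
  have h3 : ∀ z : ℤ_[p],
      (‖z‖ = 1 → ((ψ (z + 1) : ℤ_[p]) : ℚ_[p]) - ((ψ z : ℤ_[p]) : ℚ_[p])
        = ((z : ℚ_[p])) ^ (-(r + 1))) ∧
      (‖z‖ < 1 → ψ (z + 1) = ψ z) := by
    intro z
    obtain ⟨u, hu⟩ := hseq z
    have hclose : ∀ᶠ n in atTop, ‖((u n : ℕ) : ℤ_[p]) - z‖ < 1 := by
      have := Metric.tendsto_atTop.mp hu 1 one_pos
      obtain ⟨N, hN⟩ := this
      exact eventually_atTop.mpr ⟨N, fun n hn => by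
        rw [← dist_eq_norm]; exact hN n hn⟩
    have htend : Tendsto (fun n => ((ψ (((u n : ℕ) : ℤ_[p]) + 1) : ℤ_[p]) : ℚ_[p])
        - ((ψ ((u n : ℕ) : ℤ_[p]) : ℤ_[p]) : ℚ_[p])) atTop
        (𝓝 (((ψ (z + 1) : ℤ_[p]) : ℚ_[p]) - ((ψ z : ℤ_[p]) : ℚ_[p]))) :=
      (hgcont.tendsto z).comp hu
    constructor
    · intro hz1
      have hznz : (z : ℚ_[p]) ≠ 0 := by
        intro h
        rw [PadicInt.norm_def, h, norm_zero] at hz1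
        exact one_ne_zero hz1.symm
      have hunit : ∀ᶠ n in atTop, ¬ p ∣ u n := by
        filter_upwards [hclose] with n hn
        rw [hdvd, not_lt]
        have : ‖((u n : ℕ) : ℤ_[p])‖ = 1 := by
          have heq : ((u n : ℕ) : ℤ_[p]) = z + (((u n : ℕ) : ℤ_[p]) - z) := by ring
          rw [heq, PadicInt.norm_add_eq_max_of_ne (by rw [hz1]; exact (ne_of_lt hn).symm),
            hz1]
          exact max_eq_left (le_of_lt hn)
        exact this.ge
      have heq' : ∀ᶠ n in atTop,
          ((ψ (((u n : ℕ) : ℤ_[p]) + 1) : ℤ_[p]) : ℚ_[p])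
            - ((ψ ((u n : ℕ) : ℤ_[p]) : ℤ_[p]) : ℚ_[p])
          = (((((u n : ℕ) : ℤ_[p])) : ℚ_[p])) ^ (-(r + 1)) := by
        filter_upwards [hunit] with n hn
        rw [hDelta (u n), if_neg hn, PadicInt.coe_natCast]
        ring
      have htend2 : Tendsto (fun n => (((((u n : ℕ) : ℤ_[p])) : ℚ_[p])) ^ (-(r + 1)))
          atTop (𝓝 (((z : ℚ_[p])) ^ (-(r + 1)))) :=
        ((hcoe.tendsto z).comp hu).zpow₀ (-(r + 1)) (Or.inl hznz)
      exact tendsto_nhds_unique (htend.congr' heq') htend2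
    · intro hz1
      have hdvds : ∀ᶠ n in atTop, p ∣ u n := by
        filter_upwards [hclose] with n hn
        rw [hdvd]
        have heq : ((u n : ℕ) : ℤ_[p]) = z + (((u n : ℕ) : ℤ_[p]) - z) := by ring
        calc ‖((u n : ℕ) : ℤ_[p])‖ = ‖z + (((u n : ℕ) : ℤ_[p]) - z)‖ := by
              rw [← heq]
          _ ≤ max ‖z‖ ‖((u n : ℕ) : ℤ_[p]) - z‖ := PadicInt.nonarchimedean _ _
          _ < 1 := max_lt hz1 hn
      have heq' : ∀ᶠ n in atTop,
          ((ψ (((u n : ℕ) : ℤ_[p]) + 1) : ℤ_[p]) : ℚ_[p])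
            - ((ψ ((u n : ℕ) : ℤ_[p]) : ℤ_[p]) : ℚ_[p]) = 0 := by
        filter_upwards [hdvds] with n hn
        rw [hDelta (u n), if_pos hn]
        ring
      have := tendsto_nhds_unique (htend.congr' heq') tendsto_const_nhds
      apply hinj
      simpa [sub_eq_zero] using this
  -- Part 1
  have hψ0 : ψ 0 = 0 := by
    apply hinj
    have := hψ 0
    simpa using this
  have hψ1 : ψ 1 = 0 := by
    apply hinj
    have := hψ 1
    simpa using this
  -- Part 2 on naturals
  have hneg1 : (-1 : ℚ_[p]) ≠ 0 := by norm_num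
  have hF : ∀ n : ℕ, ((ψ ((n : ℕ) : ℤ_[p]) : ℤ_[p]) : ℚ_[p])
      = (-1 : ℚ_[p]) ^ r * ((ψ (1 - ((n : ℕ) : ℤ_[p])) : ℤ_[p]) : ℚ_[p]) := by
    intro n
    induction n with
    | zero => simp [hψ0, hψ1]
    | succ n ih =>
      have hcast : (((n + 1 : ℕ)) : ℤ_[p]) = ((n : ℕ) : ℤ_[p]) + 1 := by push_cast; ring
      have hcast2 : (1 : ℤ_[p]) - (((n : ℕ) : ℤ_[p]) + 1) = -((n : ℕ) : ℤ_[p]) := by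
        ring
      have hcast3 : (1 : ℤ_[p]) - ((n : ℕ) : ℤ_[p]) = (-((n : ℕ) : ℤ_[p])) + 1 := by ring
      rw [hcast, hcast2]
      by_cases hn : p ∣ n
      · have h1 : ‖(-((n : ℕ) : ℤ_[p]))‖ < 1 := by
          rw [norm_neg, ← hdvd]; exact hn
        have h2 := (h3 (-((n : ℕ) : ℤ_[p]))).2 h1
        rw [hDelta n, if_pos hn, add_zero, ih, hcast3, h2]
      · have h1 : ‖(-((n : ℕ) : ℤ_[p]))‖ = 1 := by
          rw [norm_neg]
          refine le_antisymm (PadicInt.norm_le_one _) ?_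
          rw [← not_lt, ← hdvd]; exact hn
        have h2 := (h3 (-((n : ℕ) : ℤ_[p]))).1 h1
        have hcoen : ((-((n : ℕ) : ℤ_[p]) : ℤ_[p]) : ℚ_[p]) = -((n : ℕ) : ℚ_[p]) := by
          push_cast; ring
        rw [hcoen] at h2
        have hψneg : ((ψ ((-((n : ℕ) : ℤ_[p])) + 1) : ℤ_[p]) : ℚ_[p])
            = ((ψ (-((n : ℕ) : ℤ_[p])) : ℤ_[p]) : ℚ_[p]) + (-((n : ℕ) : ℚ_[p])) ^ (-(r + 1)) := by
          linear_combination h2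
        rw [hDelta n, if_neg hn, ih, hcast3, hψneg]
        have hpow : (-((n : ℕ) : ℚ_[p])) ^ (-(r + 1))
            = (-1 : ℚ_[p]) ^ (-(r + 1)) * ((n : ℚ_[p])) ^ (-(r + 1)) := by
          rw [← mul_zpow]
          congr 1
          ring
        have hpow2 : (-1 : ℚ_[p]) ^ r * (-1 : ℚ_[p]) ^ (-(r + 1)) = -1 := by
          rw [← zpow_add₀ hneg1, show r + -(r + 1) = (-1 : ℤ) by ring]
          norm_num
        rw [hpow, mul_add, ← mul_assoc, hpow2]
        ring
  -- Part 2 by density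
  have h2 : ∀ z : ℤ_[p], ((ψ z : ℤ_[p]) : ℚ_[p])
      = (-1 : ℚ_[p]) ^ r * ((ψ (1 - z) : ℤ_[p]) : ℚ_[p]) := by
    have hc1 : Continuous (fun z : ℤ_[p] => ((ψ z : ℤ_[p]) : ℚ_[p])) := hcoe.comp hψcont
    have hc2 : Continuous (fun z : ℤ_[p] =>
        (-1 : ℚ_[p]) ^ r * ((ψ (1 - z) : ℤ_[p]) : ℚ_[p])) :=
      continuous_const.mul (hcoe.comp (hψcont.comp (continuous_const.sub continuous_id)))
    have := Continuous.ext_on (PadicInt.denseRange_natCast) hc1 hc2 ?_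
    · exact fun z => congrFun this z
    · rintro x ⟨n, rfl⟩
      exact hF n
  exact ⟨⟨hψ0, hψ1⟩, h2, h3⟩
end

section
/- Let p be a prime, N ≥ 2 an integer with p ∤ N, n an integer with 0 ≤ n < N, and r ∈ ℤ. Let K be a field equipped with a complete nonarchimedean absolute value, together with an isometric embedding ℚ_p → K (so ℤ_p ⊂ K), and let ζ ∈ K be a primitive N-th root of unity. Then for each j = 1, …, N−1 the limit defining ln_{r+1}^{(p)}(ζ^j) exists in K, and ψ̃_p^{(r)}(n/N) = N^r · Σ_{j=1}^{N−1} (1 − ζ^{−jn}) · ln_{r+1}^{(p)}(ζ^j), an equality in K, where n/N ∈ ℤ_p (since p ∤ N) and ψ̃_p^{(r)}(n/N) is viewed in K via ℤ_p ⊂ K. -/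
open Finset Filter

section Aux

variable (p : ℕ) [hp : Fact p.Prime] (r : ℤ)

/-- Auxiliary: `a^(m*j) = (a^m)^j` for nonzero `a` in a group with zero. -/
lemma zpow_mul_natCast' {K : Type*} [GroupWithZero K] {a : K} (ha : a ≠ 0) (m : ℤ) (j : ℕ) :
    a ^ (m * (j : ℤ)) = (a ^ m) ^ j := by
  induction j with
  | zero => simp
  | succ j ih =>
    push_cast
    rw [mul_add, zpow_add₀ ha, ih, mul_one, pow_succ]

/-- The local term function: `z ↦ z^{-(r+1)}` on units of `ℤ_p`, `0` elsewhere. -/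
noncomputable def gfun (z : ℤ_[p]) : ℚ_[p] :=
  if ‖z‖ = 1 then (z : ℚ_[p]) ^ (-(r + 1)) else 0

lemma isClopen_unitSet : IsClopen {z : ℤ_[p] | ‖z‖ = 1} := by
  have : {z : ℤ_[p] | ‖z‖ = 1} = (Metric.ball (0 : ℤ_[p]) 1)ᶜ := by
    ext z
    simp only [Set.mem_setOf_eq, Set.mem_compl_iff, Metric.mem_ball, dist_zero_right, not_lt]
    constructor
    · intro h; exact h.ge
    · intro h; exact le_antisymm (PadicInt.norm_le_one z) h
  rw [this]
  exact (IsUltrametricDist.isClopen_ball _ _).compl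

lemma continuous_gfun : Continuous (gfun p r) := by
  have hfr : frontier {z : ℤ_[p] | ‖z‖ = 1} = ∅ := (isClopen_unitSet p).frontier_eq
  have h1 : Continuous (fun z : ℤ_[p] => if ‖z‖ = 1 then (z : ℚ_[p]) else 1) := by
    apply Continuous.if
    · intro a ha
      rw [show {z : ℤ_[p] | ‖z‖ = 1} = {z : ℤ_[p] | ‖z‖ = 1} from rfl] at ha
      simp [hfr] at ha
    · exact (Isometry.of_dist_eq (fun a b : ℤ_[p] => by
        rw [dist_eq_norm, dist_eq_norm, ← PadicInt.coe_sub,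
          PadicInt.padic_norm_e_of_padicInt])).continuous
    · exact continuous_const
  have h1ne : ∀ z : ℤ_[p], (if ‖z‖ = 1 then (z : ℚ_[p]) else 1) ≠ 0 := by
    intro z
    split_ifs with h
    · intro h0
      rw [PadicInt.coe_eq_zero] at h0
      simp [h0] at h
    · exact one_ne_zero
  have h2 : Continuous (fun z : ℤ_[p] => (if ‖z‖ = 1 then (z : ℚ_[p]) else 1) ^ (-(r + 1))) := by
    rw [continuous_iff_continuousAt]
    intro z
    exact h1.continuousAt.zpow₀ _ (Or.inl (h1ne z))
  have h3 : Continuous (fun z : ℤ_[p] => if ‖z‖ = 1 then (0 : ℚ_[p]) else 1) := by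
    apply Continuous.if
    · intro a ha; simp [hfr] at ha
    · exact continuous_const
    · exact continuous_const
  have : gfun p r = fun z : ℤ_[p] =>
      (if ‖z‖ = 1 then (z : ℚ_[p]) else 1) ^ (-(r + 1)) - (if ‖z‖ = 1 then (0 : ℚ_[p]) else 1) := by
    funext z
    simp only [gfun]
    split_ifs with h
    · ring
    · simp
  rw [this]
  exact h2.sub h3

lemma norm_natCast_eq_one_iff (m : ℕ) : ‖(m : ℤ_[p])‖ = 1 ↔ ¬ (p ∣ m) := by
  have h := PadicInt.norm_int_lt_one_iff_dvd (p := p) (m : ℤ)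
  have hc : ((m : ℤ) : ℤ_[p]) = (m : ℤ_[p]) := by push_cast; ring
  rw [hc] at h
  have hle := PadicInt.norm_le_one (m : ℤ_[p])
  rw [← Int.natCast_dvd_natCast, ← h]
  constructor
  · intro h1 hlt; rw [h1] at hlt; exact lt_irrefl _ hlt
  · intro h1; exact le_antisymm hle (not_lt.mp h1)

lemma psi_step (ψ : ℤ_[p] → ℤ_[p]) (hψcont : Continuous ψ)
    (hψ : ∀ m : ℕ, ((ψ (m : ℤ_[p]) : ℤ_[p]) : ℚ_[p]) =
      ∑ k ∈ (Finset.Ico 1 m).filter (fun k => ¬ p ∣ k), ((k : ℚ_[p])) ^ (-(r + 1)))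
    (y : ℤ_[p]) :
    ((ψ (y + 1) : ℤ_[p]) : ℚ_[p]) = ((ψ y : ℤ_[p]) : ℚ_[p]) + gfun p r y := by
  have hcoe : Continuous (fun z : ℤ_[p] => (z : ℚ_[p])) :=
    (Isometry.of_dist_eq (fun a b : ℤ_[p] => by
        rw [dist_eq_norm, dist_eq_norm, ← PadicInt.coe_sub,
          PadicInt.padic_norm_e_of_padicInt])).continuous
  have hdense : Dense (Set.range (Nat.cast : ℕ → ℤ_[p])) := PadicInt.denseRange_natCast
  have hf : Continuous (fun y : ℤ_[p] => ((ψ (y + 1) : ℤ_[p]) : ℚ_[p])) :=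
    hcoe.comp (hψcont.comp (continuous_id.add continuous_const))
  have hg : Continuous (fun y : ℤ_[p] => ((ψ y : ℤ_[p]) : ℚ_[p]) + gfun p r y) :=
    (hcoe.comp hψcont).add (continuous_gfun p r)
  have heq := Continuous.ext_on hdense hf hg ?_
  · exact congrFun heq y
  · rintro _ ⟨m, rfl⟩
    have hm1 : ((m : ℤ_[p]) + 1) = ((m + 1 : ℕ) : ℤ_[p]) := by push_cast; ring
    have hgm : gfun p r (m : ℤ_[p]) =
        if ¬ p ∣ m then ((m : ℕ) : ℚ_[p]) ^ (-(r + 1)) else 0 := by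
      by_cases hd : p ∣ m
      · simp [gfun, norm_natCast_eq_one_iff p m, hd]
      · simp only [gfun, hd, not_false_eq_true, if_true]
        rw [if_pos ((norm_natCast_eq_one_iff p m).mpr hd), PadicInt.coe_natCast]
    simp only [hm1, hψ, Finset.sum_filter]
    rcases Nat.eq_zero_or_pos m with hm | hm
    · subst hm
      simp at hgm
      simp [hgm, Finset.Ico_self]
    · rw [Finset.sum_Ico_succ_top hm, hgm]

lemma psi_tele (ψ : ℤ_[p] → ℤ_[p]) (hψcont : Continuous ψ)
    (hψ : ∀ m : ℕ, ((ψ (m : ℤ_[p]) : ℤ_[p]) : ℚ_[p]) =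
      ∑ k ∈ (Finset.Ico 1 m).filter (fun k => ¬ p ∣ k), ((k : ℚ_[p])) ^ (-(r + 1)))
    (y : ℤ_[p]) (M : ℕ) :
    ((ψ (y + M) : ℤ_[p]) : ℚ_[p]) =
      ((ψ y : ℤ_[p]) : ℚ_[p]) + ∑ t ∈ Finset.range M, gfun p r (y + t) := by
  induction M with
  | zero => simp
  | succ M ih =>
    have : (y + ((M + 1 : ℕ) : ℤ_[p])) = (y + M) + 1 := by push_cast; ring
    rw [this, psi_step p r ψ hψcont hψ, ih, Finset.sum_range_succ, add_assoc]

end Aux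

/-- The sequence whose limit (when it exists) is the `p`-adic polylogarithm value
`ln_r^{(p)}(ε)`, for `ε` a root of unity of order prime to `p`. -/
noncomputable def polylogSeq (p : ℕ) [Fact p.Prime] {K : Type*} [NontriviallyNormedField K]
    (ι : ℚ_[p] →+* K) (r : ℤ) (ε : K) (s : ℕ) : K :=
  (1 - ε ^ (p ^ s))⁻¹ *
    ∑ k ∈ (Finset.range (p ^ s)).filter (fun k => ¬ p ∣ k), ε ^ k * ι ((k : ℚ_[p]) ^ (-r))

set_option maxHeartbeats 1600000 in
theorem polygamma_via_polylog_at_roots_of_unity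
    (p : ℕ) [Fact p.Prime] (N : ℕ) (hN : 2 ≤ N) (hpN : ¬ p ∣ N)
    (n : ℕ) (hn : n < N) (r : ℤ)
    (K : Type*) [NontriviallyNormedField K] [CompleteSpace K] [IsUltrametricDist K]
    (ι : ℚ_[p] →+* K) (hι : ∀ x : ℚ_[p], ‖ι x‖ = ‖x‖)
    (ζ : K) (hζ : IsPrimitiveRoot ζ N)
    (ψ : ℤ_[p] → ℤ_[p]) (hψcont : Continuous ψ)
    (hψ : ∀ m : ℕ, ((ψ (m : ℤ_[p]) : ℤ_[p]) : ℚ_[p]) =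
      ∑ k ∈ (Finset.Ico 1 m).filter (fun k => ¬ p ∣ k), ((k : ℚ_[p])) ^ (-(r + 1)))
    (x : ℤ_[p]) (hx : (N : ℤ_[p]) * x = (n : ℤ_[p])) :
    ∃ L : ℕ → K,
      (∀ j ∈ Finset.Icc 1 (N - 1),
        Tendsto (polylogSeq p ι (r + 1) (ζ ^ j)) atTop (nhds (L j))) ∧
      ι ((ψ x : ℤ_[p]) : ℚ_[p]) = ι ((N : ℚ_[p]) ^ r) *
        ∑ j ∈ Finset.Icc 1 (N - 1), (1 - ζ ^ (-(j * n : ℤ))) * L j := by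
  classical
  have hp' : p.Prime := Fact.out
  have hN0 : 0 < N := by omega
  set e : ℤ := -(r + 1) with he
  -- basic facts about ζ
  have hζN : ζ ^ N = 1 := hζ.pow_eq_one
  have hζne : ζ ≠ 0 := by
    intro h
    rw [h, zero_pow hN0.ne'] at hζN
    exact zero_ne_one hζN
  have hζnorm : ‖ζ‖ = 1 := by
    have hpow : ‖ζ‖ ^ N = 1 := by rw [← norm_pow, hζN, norm_one]
    rcases lt_trichotomy ‖ζ‖ 1 with h | h | h
    · have := pow_lt_one₀ (norm_nonneg ζ) h hN0.ne'
      rw [hpow] at this; exact absurd this (lt_irrefl 1)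
    · exact h
    · have := one_lt_pow₀ h hN0.ne'
      rw [hpow] at this; exact absurd this (lt_irrefl 1)
  -- N is a unit in ℤ_p
  have hNnorm : ‖(N : ℤ_[p])‖ = 1 := (norm_natCast_eq_one_iff p N).mpr hpN
  have hNne : (N : ℤ_[p]) ≠ 0 := by
    intro h; rw [h, norm_zero] at hNnorm; exact zero_ne_one hNnorm
  obtain ⟨U, hU⟩ := PadicInt.isUnit_iff.mpr hNnorm
  set u : ℤ_[p] := ((U⁻¹ : ℤ_[p]ˣ) : ℤ_[p]) with hu
  have hNu : (N : ℤ_[p]) * u = 1 := by rw [← hU, hu]; exact_mod_cast U.mul_inv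
  have hunorm : ‖u‖ ≤ 1 := PadicInt.norm_le_one u
  have hxu : x = u * (n : ℤ_[p]) := by
    have h1 : u * ((N : ℤ_[p]) * x) = u * (n : ℤ_[p]) := by rw [hx]
    rw [← mul_assoc, mul_comm u, hNu, one_mul] at h1
    exact h1
  have hQN : ((N : ℚ_[p])) ≠ 0 := Nat.cast_ne_zero.mpr hN0.ne'
  -- the summand function
  set F : ℕ → ℚ_[p] := fun k => if ¬ p ∣ k then (k : ℚ_[p]) ^ e else 0 with hF
  -- counting data
  set Ms : ℕ → ℕ → ℕ := fun a s => (p ^ s - a - 1) / N + 1 with hMs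
  set cs : ℕ → ℕ → ℕ := fun a s => N * Ms a s + a - p ^ s with hcs
  have key1 : ∀ a s, a < N → N ≤ p ^ s →
      N * Ms a s + a = p ^ s + cs a s ∧ cs a s < N := by
    intro a s ha hs
    have h1 := Nat.div_add_mod (p ^ s - a - 1) N
    have h2 := Nat.mod_lt (p ^ s - a - 1) hN0
    have h3 : N * Ms a s = N * ((p ^ s - a - 1) / N) + N := by
      simp only [hMs]; ring
    simp only [hcs]
    omega
  have hmem : ∀ a s, a < N → N ≤ p ^ s → ∀ k : ℕ,
      (k < p ^ s ∧ k % N = a) ↔ ∃ t, t < Ms a s ∧ k = N * t + a := by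
    intro a s ha hs k
    constructor
    · rintro ⟨hk, hmodk⟩
      refine ⟨k / N, ?_, ?_⟩
      · have hk2 : N * (k / N) + a = k := by
          conv_rhs => rw [← Nat.div_add_mod k N]
          rw [hmodk]
        have h4 : N * (k / N) ≤ p ^ s - a - 1 := by omega
        have h5 : k / N ≤ (p ^ s - a - 1) / N := by
          rw [Nat.le_div_iff_mul_le hN0, mul_comm]
          exact h4
        simp only [hMs]; omega
      · conv_lhs => rw [← Nat.div_add_mod k N]
        rw [hmodk]
    · rintro ⟨t, ht, rfl⟩
      constructor
      · have h5 : t ≤ (p ^ s - a - 1) / N := by simp only [hMs] at ht; omega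
        have h6 : N * t ≤ N * ((p ^ s - a - 1) / N) := Nat.mul_le_mul_left N h5
        have h7 : N * ((p ^ s - a - 1) / N) ≤ p ^ s - a - 1 := Nat.mul_div_le _ N
        omega
      · rw [Nat.mul_add_mod, Nat.mod_eq_of_lt ha]
  -- the class sums
  have class_sum : ∀ a s, a < N → N ≤ p ^ s →
      ∑ k ∈ (Finset.range (p ^ s)).filter (fun k => k % N = a), F k
        = (N : ℚ_[p]) ^ e *
            (((ψ (u * ((p ^ s + cs a s : ℕ) : ℤ_[p])) : ℤ_[p]) : ℚ_[p]) -
              ((ψ (u * (a : ℤ_[p])) : ℤ_[p]) : ℚ_[p])) := by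
    intro a s ha hs
    have hstep1 : ∑ k ∈ (Finset.range (p ^ s)).filter (fun k => k % N = a), F k
        = ∑ t ∈ Finset.range (Ms a s), F (N * t + a) := by
      refine Finset.sum_nbij' (fun k => k / N) (fun t => N * t + a) ?_ ?_ ?_ ?_ ?_
      · intro k hk
        rw [Finset.mem_filter, Finset.mem_range] at hk
        obtain ⟨t, ht, rfl⟩ := (hmem a s ha hs k).mp hk
        rw [Finset.mem_range]
        rwa [Nat.mul_add_div hN0, Nat.div_eq_of_lt ha, add_zero]
      · intro t ht
        rw [Finset.mem_range] at ht
        rw [Finset.mem_filter, Finset.mem_range]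
        exact (hmem a s ha hs _).mpr ⟨t, ht, rfl⟩
      · intro k hk
        rw [Finset.mem_filter, Finset.mem_range] at hk
        obtain ⟨t, ht, rfl⟩ := (hmem a s ha hs k).mp hk
        rw [Nat.mul_add_div hN0, Nat.div_eq_of_lt ha, add_zero]
      · intro t ht
        rw [Nat.mul_add_div hN0, Nat.div_eq_of_lt ha, add_zero]
      · intro k hk
        rw [Finset.mem_filter, Finset.mem_range] at hk
        obtain ⟨t, ht, rfl⟩ := (hmem a s ha hs k).mp hk
        rw [Nat.mul_add_div hN0, Nat.div_eq_of_lt ha, add_zero]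
    have hterm : ∀ t : ℕ, F (N * t + a) = (N : ℚ_[p]) ^ e * gfun p r (u * (a : ℤ_[p]) + (t : ℤ_[p])) := by
      intro t
      have hz : ((N : ℤ_[p])) * (u * (a : ℤ_[p]) + (t : ℤ_[p])) = ((N * t + a : ℕ) : ℤ_[p]) := by
        push_cast
        linear_combination (a : ℤ_[p]) * hNu
      have hnormz : ‖u * (a : ℤ_[p]) + (t : ℤ_[p])‖ = ‖((N * t + a : ℕ) : ℤ_[p])‖ := by
        rw [← hz, norm_mul, hNnorm, one_mul]
      have hcast : ((N * t + a : ℕ) : ℚ_[p])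
          = (N : ℚ_[p]) * ((u * (a : ℤ_[p]) + (t : ℤ_[p]) : ℤ_[p]) : ℚ_[p]) := by
        have hz' := congrArg (fun z : ℤ_[p] => (z : ℚ_[p])) hz
        push_cast at hz'
        push_cast
        linear_combination -hz'
      by_cases hd : p ∣ (N * t + a)
      · have h1 : F (N * t + a) = 0 := by simp [hF, hd]
        have hcond : ¬ (‖u * (a : ℤ_[p]) + (t : ℤ_[p])‖ = 1) := by
          rw [hnormz, norm_natCast_eq_one_iff]
          simp [hd]
        have h2 : gfun p r (u * (a : ℤ_[p]) + (t : ℤ_[p])) = 0 := by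
          simp only [gfun, if_neg hcond]
        rw [h1, h2, mul_zero]
      · have h1 : F (N * t + a) = ((N * t + a : ℕ) : ℚ_[p]) ^ e := by simp [hF, hd]
        have hcond : ‖u * (a : ℤ_[p]) + (t : ℤ_[p])‖ = 1 := by
          rw [hnormz, norm_natCast_eq_one_iff]
          exact hd
        have h2 : gfun p r (u * (a : ℤ_[p]) + (t : ℤ_[p]))
            = ((u * (a : ℤ_[p]) + (t : ℤ_[p]) : ℤ_[p]) : ℚ_[p]) ^ (-(r + 1)) := by
          simp only [gfun, if_pos hcond]
        rw [h1, h2, hcast, mul_zpow, ← he]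
    have hsum2 : ∑ t ∈ Finset.range (Ms a s), F (N * t + a)
        = (N : ℚ_[p]) ^ e * ∑ t ∈ Finset.range (Ms a s), gfun p r (u * (a : ℤ_[p]) + (t : ℤ_[p])) := by
      rw [Finset.mul_sum]
      exact Finset.sum_congr rfl (fun t _ => hterm t)
    have harg : u * (a : ℤ_[p]) + ((Ms a s : ℕ) : ℤ_[p]) = u * ((p ^ s + cs a s : ℕ) : ℤ_[p]) := by
      apply mul_left_cancel₀ hNne
      have h := (key1 a s ha hs).1
      rw [mul_add, ← mul_assoc, hNu, one_mul, ← mul_assoc, hNu, one_mul, ← h]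
      push_cast
      ring
    have htele := psi_tele p r ψ hψcont hψ (u * (a : ℤ_[p])) (Ms a s)
    rw [harg] at htele
    rw [hstep1, hsum2, htele]
    ring
  -- power mod N
  have hmodpow : ∀ w : K, w ^ N = 1 → ∀ k : ℕ, w ^ k = w ^ (k % N) := by
    intro w hw k
    conv_lhs => rw [← Nat.div_add_mod k N]
    rw [pow_add, pow_mul, hw, one_pow, one_mul]
  have hεN : ∀ j : ℕ, (ζ ^ j) ^ N = 1 := by
    intro j
    rw [← pow_mul, mul_comm, pow_mul, hζN, one_pow]
  have hcs_mod : ∀ a s, a < N → N ≤ p ^ s → (cs a s + p ^ s) % N = a := by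
    intro a s ha hs
    have h := (key1 a s ha hs).1
    rw [add_comm, ← h, Nat.mul_add_mod, Nat.mod_eq_of_lt ha]
  have hcs_inv : ∀ b s, b < N → N ≤ p ^ s → cs ((b + p ^ s) % N) s = b := by
    intro b s hb hs
    have ha : (b + p ^ s) % N < N := Nat.mod_lt _ hN0
    have h1 := hcs_mod _ s ha hs
    have h3 : cs ((b + p ^ s) % N) s % N = b % N :=
      Nat.ModEq.add_right_cancel' (p ^ s) h1
    rwa [Nat.mod_eq_of_lt ((key1 _ s ha hs).2), Nat.mod_eq_of_lt hb] at h3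
  -- the limit candidates
  set A : ℕ → K := fun j => ∑ b ∈ Finset.range N,
    (ζ ^ j) ^ b * ι ((ψ (u * (b : ℤ_[p])) : ℤ_[p]) : ℚ_[p]) with hA
  set E : ℕ → ℕ → K := fun j s => ∑ a ∈ Finset.range N,
    (ζ ^ j) ^ a * (ι ((ψ (u * ((p ^ s + cs a s : ℕ) : ℤ_[p])) : ℤ_[p]) : ℚ_[p])
      - ι ((ψ (u * ((cs a s : ℕ) : ℤ_[p])) : ℤ_[p]) : ℚ_[p])) with hE
  set L : ℕ → K := fun j => ι ((N : ℚ_[p]) ^ e) * (- A j) with hL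
  -- reindexing lemma
  have hreindex : ∀ j s, N ≤ p ^ s →
      ∑ a ∈ Finset.range N, (ζ ^ j) ^ a * ι ((ψ (u * ((cs a s : ℕ) : ℤ_[p])) : ℤ_[p]) : ℚ_[p])
        = (ζ ^ j) ^ (p ^ s) * A j := by
    intro j s hs
    rw [hA, Finset.mul_sum]
    refine Finset.sum_nbij' (fun a => cs a s) (fun b => (b + p ^ s) % N) ?_ ?_ ?_ ?_ ?_
    · intro a ha
      rw [Finset.mem_range] at ha ⊢
      exact (key1 a s ha hs).2
    · intro b _
      rw [Finset.mem_range]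
      exact Nat.mod_lt _ hN0
    · intro a ha
      rw [Finset.mem_range] at ha
      exact hcs_mod a s ha hs
    · intro b hb
      rw [Finset.mem_range] at hb
      exact hcs_inv b s hb hs
    · intro a ha
      rw [Finset.mem_range] at ha
      have hexp : (ζ ^ j) ^ (p ^ s + cs a s) = (ζ ^ j) ^ a := by
        rw [hmodpow _ (hεN j), add_comm (p ^ s), hcs_mod a s ha hs]
      rw [← mul_assoc, ← pow_add, hexp]
  -- the key identity for the partial sums
  have hS : ∀ j s, N ≤ p ^ s →
      ∑ k ∈ (Finset.range (p ^ s)).filter (fun k => ¬ p ∣ k),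
          (ζ ^ j) ^ k * ι ((k : ℚ_[p]) ^ e)
        = ι ((N : ℚ_[p]) ^ e) * (((ζ ^ j) ^ (p ^ s) - 1) * A j + E j s) := by
    intro j s hs
    have hstep1 : ∑ k ∈ (Finset.range (p ^ s)).filter (fun k => ¬ p ∣ k),
          (ζ ^ j) ^ k * ι ((k : ℚ_[p]) ^ e)
        = ∑ k ∈ Finset.range (p ^ s), (ζ ^ j) ^ k * ι (F k) := by
      rw [Finset.sum_filter]
      refine Finset.sum_congr rfl (fun k _ => ?_)
      by_cases hd : p ∣ k
      · simp [hF, hd]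
      · simp [hF, hd]
    have hstep2 : ∑ k ∈ Finset.range (p ^ s), (ζ ^ j) ^ k * ι (F k)
        = ∑ a ∈ Finset.range N, ∑ k ∈ (Finset.range (p ^ s)).filter (fun k => k % N = a),
            (ζ ^ j) ^ k * ι (F k) :=
      (Finset.sum_fiberwise_of_maps_to (fun k _ => Finset.mem_range.mpr (Nat.mod_lt k hN0)) _).symm
    have hstep3 : ∀ a, a < N →
        ∑ k ∈ (Finset.range (p ^ s)).filter (fun k => k % N = a), (ζ ^ j) ^ k * ι (F k)
          = (ζ ^ j) ^ a * (ι ((N : ℚ_[p]) ^ e) *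
              (ι ((ψ (u * ((p ^ s + cs a s : ℕ) : ℤ_[p])) : ℤ_[p]) : ℚ_[p])
                - ι ((ψ (u * (a : ℤ_[p])) : ℤ_[p]) : ℚ_[p]))) := by
      intro a ha
      have h1 : ∀ k ∈ (Finset.range (p ^ s)).filter (fun k => k % N = a),
          (ζ ^ j) ^ k * ι (F k) = (ζ ^ j) ^ a * ι (F k) := by
        intro k hk
        rw [Finset.mem_filter] at hk
        rw [hmodpow _ (hεN j) k, hk.2]
      rw [Finset.sum_congr rfl h1, ← Finset.mul_sum, ← map_sum, class_sum a s ha hs,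
        map_mul, map_sub]
    rw [hstep1, hstep2, Finset.sum_congr rfl (fun a ha => hstep3 a (Finset.mem_range.mp ha))]
    have h4 : ∀ a ∈ Finset.range N, (ζ ^ j) ^ a * (ι ((N : ℚ_[p]) ^ e) *
              (ι ((ψ (u * ((p ^ s + cs a s : ℕ) : ℤ_[p])) : ℤ_[p]) : ℚ_[p])
                - ι ((ψ (u * (a : ℤ_[p])) : ℤ_[p]) : ℚ_[p])))
        = ι ((N : ℚ_[p]) ^ e) *
            ((ζ ^ j) ^ a * ι ((ψ (u * ((p ^ s + cs a s : ℕ) : ℤ_[p])) : ℤ_[p]) : ℚ_[p])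
              - (ζ ^ j) ^ a * ι ((ψ (u * (a : ℤ_[p])) : ℤ_[p]) : ℚ_[p])) := by
      intro a _
      ring
    rw [Finset.sum_congr rfl h4, ← Finset.mul_sum, Finset.sum_sub_distrib]
    have h5 : ∑ a ∈ Finset.range N,
        (ζ ^ j) ^ a * ι ((ψ (u * ((p ^ s + cs a s : ℕ) : ℤ_[p])) : ℤ_[p]) : ℚ_[p])
        = E j s + ∑ a ∈ Finset.range N,
            (ζ ^ j) ^ a * ι ((ψ (u * ((cs a s : ℕ) : ℤ_[p])) : ℤ_[p]) : ℚ_[p]) := by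
      rw [hE, ← Finset.sum_add_distrib]
      exact Finset.sum_congr rfl (fun a _ => by ring)
    have h6 : ∑ a ∈ Finset.range N, (ζ ^ j) ^ a * ι ((ψ (u * (a : ℤ_[p])) : ℤ_[p]) : ℚ_[p])
        = A j := by rw [hA]
    rw [h5, hreindex j s hs, h6]
    ring
  -- coprimality and nonvanishing
  have hco : ∀ s : ℕ, Nat.Coprime N (p ^ s) := fun s =>
    (((Nat.Prime.coprime_iff_not_dvd hp').mpr hpN).pow_left s).symm
  have hne1 : ∀ j, 1 ≤ j → j < N → ∀ s : ℕ, (ζ ^ j) ^ (p ^ s) ≠ 1 := by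
    intro j hj1 hjN s h
    rw [← pow_mul, hζ.pow_eq_one_iff_dvd] at h
    have h2 := Nat.Coprime.dvd_of_dvd_mul_right (hco s) h
    have h3 := Nat.le_of_dvd (by omega) h2
    omega
  -- E tends to zero
  have hE0 : ∀ j, Tendsto (fun s => E j s) atTop (nhds 0) := by
    intro j
    rw [NormedAddCommGroup.tendsto_nhds_zero]
    intro ε0 hε0
    have hUC := CompactSpace.uniformContinuous_of_continuous hψcont
    rw [Metric.uniformContinuous_iff] at hUC
    obtain ⟨δ, hδ0, hδ⟩ := hUC (ε0 / (N + 1)) (by positivity)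
    have hps : Tendsto (fun s : ℕ => ‖((p : ℤ_[p])) ^ s‖) atTop (nhds 0) := by
      have h1 : ‖(p : ℤ_[p])‖ < 1 := by
        rw [PadicInt.norm_p]
        have h1p : (1:ℝ) < p := by exact_mod_cast hp'.one_lt
        rw [inv_lt_one_iff₀]
        right
        exact h1p
      have h2 := (tendsto_pow_atTop_nhds_zero_of_norm_lt_one h1).norm
      simpa using h2
    have hev : ∀ᶠ s : ℕ in atTop, ‖((p : ℤ_[p])) ^ s‖ < δ :=
      hps.eventually_lt_const hδ0
    filter_upwards [hev] with s hsδ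
    have hterm : ∀ a ∈ Finset.range N,
        ‖(ζ ^ j) ^ a * (ι ((ψ (u * ((p ^ s + cs a s : ℕ) : ℤ_[p])) : ℤ_[p]) : ℚ_[p])
          - ι ((ψ (u * ((cs a s : ℕ) : ℤ_[p])) : ℤ_[p]) : ℚ_[p]))‖ < ε0 / (N + 1) := by
      intro a _
      have hz1 : ‖(ζ ^ j) ^ a‖ = 1 := by
        rw [← pow_mul, norm_pow, hζnorm, one_pow]
      rw [norm_mul, hz1, one_mul, ← map_sub, hι, ← PadicInt.coe_sub,
        PadicInt.padic_norm_e_of_padicInt, ← dist_eq_norm]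
      apply hδ
      rw [dist_eq_norm]
      have harg : u * ((p ^ s + cs a s : ℕ) : ℤ_[p]) - u * ((cs a s : ℕ) : ℤ_[p])
          = u * ((p : ℤ_[p])) ^ s := by
        push_cast
        ring
      rw [harg, norm_mul]
      calc ‖u‖ * ‖((p : ℤ_[p])) ^ s‖ ≤ 1 * ‖((p : ℤ_[p])) ^ s‖ :=
            mul_le_mul_of_nonneg_right hunorm (norm_nonneg _)
        _ = ‖((p : ℤ_[p])) ^ s‖ := one_mul _
        _ < δ := hsδ
    calc ‖E j s‖ ≤ ∑ a ∈ Finset.range N,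
          ‖(ζ ^ j) ^ a * (ι ((ψ (u * ((p ^ s + cs a s : ℕ) : ℤ_[p])) : ℤ_[p]) : ℚ_[p])
            - ι ((ψ (u * ((cs a s : ℕ) : ℤ_[p])) : ℤ_[p]) : ℚ_[p]))‖ := by
          rw [hE]
          exact norm_sum_le _ _
      _ < ∑ _a ∈ Finset.range N, (ε0 / (N + 1)) :=
          Finset.sum_lt_sum_of_nonempty ⟨0, Finset.mem_range.mpr hN0⟩ hterm
      _ ≤ ε0 := by
          rw [Finset.sum_const, Finset.card_range, nsmul_eq_mul]
          have h7 : (0:ℝ) < ε0 / (N + 1) := by positivity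
          have h8 : ((N : ℝ) + 1) * (ε0 / (N + 1)) = ε0 := by
            field_simp
          nlinarith [h7]
  -- eventual bound for p ^ s
  have hev2 : ∀ᶠ s : ℕ in atTop, N ≤ p ^ s := by
    refine eventually_atTop.mpr ⟨N, fun s hs => le_trans hs ?_⟩
    exact le_of_lt (Nat.lt_pow_self (n := s) hp'.one_lt)
  -- convergence
  have hconv : ∀ j ∈ Finset.Icc 1 (N - 1),
      Tendsto (polylogSeq p ι (r + 1) (ζ ^ j)) atTop (nhds (L j)) := by
    intro j hj
    rw [Finset.mem_Icc] at hj
    have hj1 : 1 ≤ j := hj.1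
    have hjN : j < N := by omega
    have hx1 : ∀ s : ℕ, (1 : K) - (ζ ^ j) ^ (p ^ s) ≠ 0 := fun s =>
      sub_ne_zero.mpr (Ne.symm (hne1 j hj1 hjN s))
    set C : ℝ := (Finset.range N).sup' ⟨0, Finset.mem_range.mpr hN0⟩
      (fun m => ‖(1 - (ζ ^ j) ^ m)⁻¹‖) with hC
    have hbound : ∀ s : ℕ, ‖(1 - (ζ ^ j) ^ (p ^ s))⁻¹‖ ≤ C := by
      intro s
      rw [hmodpow _ (hεN j) (p ^ s), hC]
      exact Finset.le_sup' (fun m => ‖(1 - (ζ ^ j) ^ m)⁻¹‖)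
        (Finset.mem_range.mpr (Nat.mod_lt _ hN0))
    have htendE : Tendsto (fun s => (1 - (ζ ^ j) ^ (p ^ s))⁻¹ * E j s) atTop (nhds 0) := by
      apply squeeze_zero_norm (a := fun s => C * ‖E j s‖)
      · intro s
        rw [norm_mul]
        exact mul_le_mul_of_nonneg_right (hbound s) (norm_nonneg _)
      · have h9 := (hE0 j).norm
        simp only [norm_zero] at h9
        simpa using h9.const_mul C
    have htd : Tendsto (fun s => L j + ι ((N : ℚ_[p]) ^ e) *
        ((1 - (ζ ^ j) ^ (p ^ s))⁻¹ * E j s)) atTop (nhds (L j)) := by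
      have h10 := htendE.const_mul (ι ((N : ℚ_[p]) ^ e))
      rw [mul_zero] at h10
      have h11 := (tendsto_const_nhds (x := L j) (f := atTop)).add h10
      simpa using h11
    refine Tendsto.congr' ?_ htd
    filter_upwards [hev2] with s hs
    rw [polylogSeq]
    simp only [← he]
    rw [hS j s hs]
    simp only [hL]
    have hw := hx1 s
    have h13 : (1 - (ζ ^ j) ^ p ^ s)⁻¹ *
        (ι ((N : ℚ_[p]) ^ e) * (((ζ ^ j) ^ p ^ s - 1) * A j + E j s))
        = ι ((N : ℚ_[p]) ^ e) * (-(((1 - (ζ ^ j) ^ p ^ s)⁻¹ * (1 - (ζ ^ j) ^ p ^ s)) * A j))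
          + ι ((N : ℚ_[p]) ^ e) * ((1 - (ζ ^ j) ^ p ^ s)⁻¹ * E j s) := by
      ring
    rw [h13, inv_mul_cancel₀ hw, one_mul]
  refine ⟨L, hconv, ?_⟩
  -- geometric sums at roots of unity
  have hgeom : ∀ m : ℤ, ∑ j ∈ Finset.range N, (ζ ^ m) ^ j
      = if (N : ℤ) ∣ m then (N : K) else 0 := by
    intro m
    by_cases hd : (N : ℤ) ∣ m
    · rw [if_pos hd, (hζ.zpow_eq_one_iff_dvd m).mpr hd]
      simp
    · rw [if_neg hd]
      have h1 : ζ ^ m ≠ 1 := fun h => hd ((hζ.zpow_eq_one_iff_dvd m).mp h)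
      rw [geom_sum_eq h1]
      have h2 : (ζ ^ m) ^ N = 1 := by
        rw [← zpow_mul_natCast' hζne m N, mul_comm, hζ.zpow_eq_one_iff_dvd]
        exact dvd_mul_right _ _
      rw [h2, sub_self, zero_div]
  have hIcc : Finset.Icc 1 (N - 1) = Finset.Ico 1 N := by
    rw [← Finset.Ico_add_one_right_eq_Icc]
    congr 1
    omega
  have hψ0 : ((ψ 0 : ℤ_[p]) : ℚ_[p]) = 0 := by
    have h := hψ 0
    rw [Nat.cast_zero] at h
    rw [h, Finset.Ico_eq_empty (by omega), Finset.filter_empty, Finset.sum_empty]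
  -- inner sums
  have hinner : ∀ b, b < N →
      ∑ j ∈ Finset.Icc 1 (N - 1), ((1 - ζ ^ (-(j * n : ℤ))) * (ζ ^ j) ^ b)
        = (if b = 0 then (N : K) else 0) - (if b = n then (N : K) else 0) := by
    intro b hb
    have hterm : ∀ j : ℕ, (1 - ζ ^ (-(j * n : ℤ))) * (ζ ^ j) ^ b
        = (ζ ^ (b : ℤ)) ^ j - (ζ ^ ((b : ℤ) - (n : ℤ))) ^ j := by
      intro j
      have h1 : (ζ ^ j) ^ b = (ζ ^ (b : ℤ)) ^ j := by
        rw [← zpow_mul_natCast' hζne (b : ℤ) j, ← pow_mul,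
          show ((b : ℤ) * (j : ℤ)) = ((b * j : ℕ) : ℤ) by push_cast; ring, zpow_natCast,
          mul_comm]
      have h2 : ζ ^ (-(j * n : ℤ)) * (ζ ^ j) ^ b = (ζ ^ ((b : ℤ) - (n : ℤ))) ^ j := by
        rw [h1, ← zpow_mul_natCast' hζne (b : ℤ) j, ← zpow_mul_natCast' hζne ((b : ℤ) - n) j,
          ← zpow_add₀ hζne]
        congr 1
        push_cast
        ring
      rw [sub_mul, one_mul, h2, h1]
    have hbot : (1 - ζ ^ (-((0 : ℕ) * n : ℤ))) * (ζ ^ (0 : ℕ)) ^ b = 0 := by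
      simp
    rw [hIcc]
    have hsum0 : ∑ j ∈ Finset.Ico 0 N, ((1 - ζ ^ (-(j * n : ℤ))) * (ζ ^ j) ^ b)
        = (1 - ζ ^ (-((0 : ℕ) * n : ℤ))) * (ζ ^ (0 : ℕ)) ^ b
          + ∑ j ∈ Finset.Ico (0 + 1) N, ((1 - ζ ^ (-(j * n : ℤ))) * (ζ ^ j) ^ b) :=
      Finset.sum_eq_sum_Ico_succ_bot hN0 _
    rw [hbot, zero_add] at hsum0
    rw [show (0 + 1) = 1 from rfl] at hsum0
    rw [← hsum0, ← Finset.range_eq_Ico, Finset.sum_congr rfl (fun j _ => hterm j),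
      Finset.sum_sub_distrib, hgeom, hgeom]
    have hd1 : ((N : ℤ) ∣ (b : ℤ)) ↔ b = 0 := by
      rw [Int.natCast_dvd_natCast]
      constructor
      · intro h
        exact Nat.eq_zero_of_dvd_of_lt h hb
      · rintro rfl
        exact dvd_zero N
    have hd2 : ((N : ℤ) ∣ ((b : ℤ) - (n : ℤ))) ↔ b = n := by
      constructor
      · intro h
        rcases le_or_gt n b with hle | hlt
        · have h' : ((b - n : ℕ) : ℤ) = (b : ℤ) - n := by omega
          rw [← h', Int.natCast_dvd_natCast] at h
          have h0 := Nat.eq_zero_of_dvd_of_lt h (by omega)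
          omega
        · have h' : ((n - b : ℕ) : ℤ) = -((b : ℤ) - n) := by omega
          have h2 : (N : ℤ) ∣ ((n - b : ℕ) : ℤ) := by
            rw [h']
            exact (dvd_neg).mpr h
          rw [Int.natCast_dvd_natCast] at h2
          have h0 := Nat.eq_zero_of_dvd_of_lt h2 (by omega)
          omega
      · rintro rfl
        simp
    rw [if_congr hd1 rfl rfl, if_congr hd2 rfl rfl]
  -- the double sum
  have hswap : ∑ j ∈ Finset.Icc 1 (N - 1), (1 - ζ ^ (-(j * n : ℤ))) * A j
      = -((N : K) * ι ((ψ x : ℤ_[p]) : ℚ_[p])) := by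
    calc ∑ j ∈ Finset.Icc 1 (N - 1), (1 - ζ ^ (-(j * n : ℤ))) * A j
        = ∑ j ∈ Finset.Icc 1 (N - 1), ∑ b ∈ Finset.range N,
            ((1 - ζ ^ (-(j * n : ℤ))) * (ζ ^ j) ^ b) *
              ι ((ψ (u * (b : ℤ_[p])) : ℤ_[p]) : ℚ_[p]) := by
          refine Finset.sum_congr rfl (fun j _ => ?_)
          rw [hA, Finset.mul_sum]
          exact Finset.sum_congr rfl (fun b _ => by ring)
      _ = ∑ b ∈ Finset.range N, (∑ j ∈ Finset.Icc 1 (N - 1),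
            ((1 - ζ ^ (-(j * n : ℤ))) * (ζ ^ j) ^ b)) *
              ι ((ψ (u * (b : ℤ_[p])) : ℤ_[p]) : ℚ_[p]) := by
          rw [Finset.sum_comm]
          exact Finset.sum_congr rfl (fun b _ => (Finset.sum_mul _ _ _).symm)
      _ = ∑ b ∈ Finset.range N,
            ((if b = 0 then (N : K) else 0) - (if b = n then (N : K) else 0)) *
              ι ((ψ (u * (b : ℤ_[p])) : ℤ_[p]) : ℚ_[p]) := by
          refine Finset.sum_congr rfl (fun b hb => ?_)
          rw [hinner b (Finset.mem_range.mp hb)]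
      _ = -((N : K) * ι ((ψ x : ℤ_[p]) : ℚ_[p])) := by
          have hexp : ∀ b ∈ Finset.range N,
              ((if b = 0 then (N : K) else 0) - (if b = n then (N : K) else 0)) *
                ι ((ψ (u * (b : ℤ_[p])) : ℤ_[p]) : ℚ_[p])
              = (if b = 0 then (N : K) * ι ((ψ (u * (b : ℤ_[p])) : ℤ_[p]) : ℚ_[p]) else 0)
                - (if b = n then (N : K) * ι ((ψ (u * (b : ℤ_[p])) : ℤ_[p]) : ℚ_[p]) else 0) := by
            intro b _
            split_ifs <;> ring
          rw [Finset.sum_congr rfl hexp, Finset.sum_sub_distrib,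
            Finset.sum_ite_eq' (Finset.range N) 0, Finset.sum_ite_eq' (Finset.range N) n,
            if_pos (Finset.mem_range.mpr hN0), if_pos (Finset.mem_range.mpr hn)]
          rw [Nat.cast_zero, mul_zero, hψ0, map_zero, mul_zero, ← hxu]
          ring
  -- final assembly
  have hLs : ∑ j ∈ Finset.Icc 1 (N - 1), (1 - ζ ^ (-(j * n : ℤ))) * L j
      = ι ((N : ℚ_[p]) ^ e) * ((N : K) * ι ((ψ x : ℤ_[p]) : ℚ_[p])) := by
    have h12 : ∀ j ∈ Finset.Icc 1 (N - 1), (1 - ζ ^ (-(j * n : ℤ))) * L j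
        = ι ((N : ℚ_[p]) ^ e) * (-((1 - ζ ^ (-(j * n : ℤ))) * A j)) := by
      intro j _
      rw [hL]
      ring
    rw [Finset.sum_congr rfl h12, ← Finset.mul_sum, Finset.sum_neg_distrib, hswap]
    ring
  rw [hLs]
  have hNK : (N : K) = ι ((N : ℚ_[p])) := (map_natCast ι N).symm
  rw [hNK, ← map_mul, ← map_mul, ← map_mul]
  have harr : (N : ℚ_[p]) ^ r * ((N : ℚ_[p]) ^ e * ((N : ℚ_[p]) * ((ψ x : ℤ_[p]) : ℚ_[p])))
      = ((ψ x : ℤ_[p]) : ℚ_[p]) := by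
    have hstep : (N : ℚ_[p]) ^ r * ((N : ℚ_[p]) ^ e * ((N : ℚ_[p]) * ((ψ x : ℤ_[p]) : ℚ_[p])))
        = ((N : ℚ_[p]) ^ r * (N : ℚ_[p]) ^ e * (N : ℚ_[p])) * ((ψ x : ℤ_[p]) : ℚ_[p]) := by
      ring
    rw [hstep, ← zpow_add₀ hQN, show r + e = -1 by rw [he]; ring, zpow_neg_one,
      inv_mul_cancel₀ hQN, one_mul]
  rw [harr]
end

section
/- (Distribution formula for the p-adic polylogarithm.) Let p be a prime, r ∈ ℤ, and N ≥ 1 an integer with p ∤ N. Let R be an integral domain which is a ℤ_p-algebra and which contains a primitive N-th root of unity ζ (i.e. ζ^N = 1 and ζ^d ≠ 1 for 0 < d < N). Then in the power series ring R[[x]] one has Σ_{j=0}^{N−1} ( Σ_{k ≥ 1, p ∤ k} ζ^{jk} x^k k^{−r} ) = N^{1−r} · Σ_{k ≥ 1, p ∤ k} x^{Nk} k^{−r}, where k^{−r} ∈ ℤ_p and N^{1−r} ∈ ℤ_p (valid since p ∤ k and p ∤ N) are viewed in R via the ℤ_p-algebra structure. -/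
open Finset

theorem padic_polylog_distribution_power_series
    (p : ℕ) [Fact p.Prime] (r : ℤ) (N : ℕ) (hN : 1 ≤ N) (hpN : ¬ p ∣ N)
    (R : Type*) [CommRing R] [IsDomain R] [Algebra ℤ_[p] R]
    (ζ : R) (hζ : IsPrimitiveRoot ζ N)
    (ν : ℕ → ℤ_[p])
    (hν : ∀ k : ℕ, ¬ p ∣ k → ((ν k : ℤ_[p]) : ℚ_[p]) = ((k : ℚ_[p])) ^ (-r))
    (μ : ℤ_[p]) (hμ : ((μ : ℤ_[p]) : ℚ_[p]) = ((N : ℚ_[p])) ^ (1 - r)) :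
    ∑ j ∈ Finset.range N,
      PowerSeries.mk (fun k =>
        if 1 ≤ k ∧ ¬ p ∣ k then ζ ^ (j * k) * algebraMap ℤ_[p] R (ν k) else 0)
    = PowerSeries.mk (fun i =>
        if N ∣ i ∧ 1 ≤ i ∧ ¬ p ∣ (i / N) then algebraMap ℤ_[p] R (μ * ν (i / N)) else 0) := by
  have hN0' : (N : ℚ_[p]) ≠ 0 := Nat.cast_ne_zero.mpr (by omega)
  have hμν : ∀ m : ℕ, ¬ p ∣ m → (N : ℤ_[p]) * ν (N * m) = μ * ν m := by
    intro m hm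
    have hNm : ¬ p ∣ N * m := by
      intro h
      rcases (Nat.Prime.dvd_mul Fact.out).mp h with h | h
      · exact hpN h
      · exact hm h
    have : (((N : ℤ_[p]) * ν (N * m) : ℤ_[p]) : ℚ_[p]) = ((μ * ν m : ℤ_[p]) : ℚ_[p]) := by
      push_cast
      rw [hν _ hNm, hν _ hm, hμ]
      push_cast
      rw [mul_zpow, zpow_sub₀ hN0', zpow_one, zpow_neg, zpow_neg, div_eq_mul_inv]
      ring
    exact Subtype.coe_injective this
  have hsum : ∀ k : ℕ, (∑ j ∈ Finset.range N, (ζ ^ k) ^ j) = if N ∣ k then (N : R) else 0 := by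
    intro k
    by_cases h : N ∣ k
    · rw [if_pos h]
      have h1 : ζ ^ k = 1 := by
        obtain ⟨c, rfl⟩ := h
        rw [pow_mul, hζ.pow_eq_one, one_pow]
      simp [h1]
    · rw [if_neg h]
      have h1 : ζ ^ k ≠ 1 := fun hh => h ((hζ.pow_eq_one_iff_dvd k).mp hh)
      have h2 : (ζ ^ k) ^ N = 1 := by
        rw [← pow_mul, mul_comm, pow_mul, hζ.pow_eq_one, one_pow]
      have h3 := geom_sum_mul (ζ ^ k) N
      rw [h2, sub_self] at h3
      rcases mul_eq_zero.mp h3 with h4 | h4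
      · exact h4
      · exact absurd (sub_eq_zero.mp h4) h1
  ext k
  rw [map_sum]
  simp only [PowerSeries.coeff_mk]
  have hrw : ∀ j, (if 1 ≤ k ∧ ¬ p ∣ k then ζ ^ (j * k) * algebraMap ℤ_[p] R (ν k) else 0)
      = (ζ ^ k) ^ j * (if 1 ≤ k ∧ ¬ p ∣ k then algebraMap ℤ_[p] R (ν k) else 0) := by
    intro j
    rw [mul_ite, mul_zero, ← pow_mul, mul_comm k j]
  simp only [hrw]
  rw [← Finset.sum_mul, hsum k]
  by_cases hdvd : N ∣ k
  · rw [if_pos hdvd]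
    obtain ⟨m, rfl⟩ := hdvd
    rw [Nat.mul_div_cancel_left m (by omega : 0 < N)]
    by_cases hp : p ∣ m
    · have hpk : p ∣ N * m := Dvd.dvd.mul_left hp N
      rw [if_neg (by tauto), if_neg (by tauto), mul_zero]
    · have hm0 : m ≠ 0 := by rintro rfl; exact hp (dvd_zero p)
      have hNm : ¬ p ∣ N * m := by
        intro h
        rcases (Nat.Prime.dvd_mul Fact.out).mp h with h | h
        · exact hpN h
        · exact hp h
      rw [if_pos ⟨Nat.one_le_iff_ne_zero.mpr (Nat.mul_ne_zero (by omega) hm0), hNm⟩, if_pos ⟨Dvd.intro m rfl, Nat.one_le_iff_ne_zero.mpr (Nat.mul_ne_zero (by omega) hm0), hp⟩,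
        ← hμν m hp, map_mul, map_natCast]
  · rw [if_neg hdvd, zero_mul, if_neg (by tauto)]
end

section
/- (Volkenborn-integral representation of the p-adic polygamma functions.) Let p be a prime and r a nonzero integer. Then: (i) the limit L := lim_{n→∞} p^{−n} · Σ_{0 ≤ k < p^n, p ∤ k} k^{−r} exists in ℚ_p; (ii) for every z ∈ ℤ_p the limit Q(z) := lim_{s→∞} p^{−s} · Σ_{0 ≤ j < p^s, z + j ∈ ℤ_p^×} (z + j)^{−r} exists in ℚ_p; and (iii) −(1/r) · Q(z) = ψ̃_p^{(r)}(z) − (1/r) · L for every z ∈ ℤ_p. (The constant −(1/r) L equals −L_p(1+r, ω^{−r}), so −(1/r)Q(z) is the r-th p-adic polygamma function ψ_p^{(r)}(z).) -/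
open Finset Filter
open scoped Classical
open scoped Topology

namespace VolkenbornAux

variable {p : ℕ} [hp : Fact p.Prime]

/-- The integrand `x ↦ x^(-r)` restricted to units (else 0). -/
noncomputable def Fp (p : ℕ) [Fact p.Prime] (r : ℤ) (x : ℤ_[p]) : ℚ_[p] :=
  if ‖x‖ = 1 then ((x : ℚ_[p])) ^ (-r) else 0

lemma norm_natCast_le_one (n : ℕ) : ‖(n : ℚ_[p])‖ ≤ 1 := by
  have := Padic.norm_int_le_one (p := p) (n : ℤ)
  simpa using this

lemma norm_sum_le' {ι : Type*} (s : Finset ι) (f : ι → ℚ_[p]) {C : ℝ} (hC : 0 ≤ C)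
    (h : ∀ i ∈ s, ‖f i‖ ≤ C) : ‖∑ i ∈ s, f i‖ ≤ C := by
  classical
  induction s using Finset.cons_induction with
  | empty => simpa using hC
  | cons a t ha ih =>
      rw [Finset.sum_cons]
      exact le_trans (Padic.nonarchimedean _ _)
        (max_le (h a (Finset.mem_cons_self _ _)) (ih fun i hi => h i (Finset.mem_cons_of_mem hi)))

lemma taylor_pow {a b c : ℚ_[p]} (ha : ‖a‖ ≤ 1) (hb : ‖b‖ ≤ 1) (hc : b = a + c) :
    ∀ n : ℕ, ‖b ^ n - a ^ n - (n : ℚ_[p]) * c * a ^ (n - 1)‖ ≤ ‖c‖ ^ 2 := by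
  intro n
  induction n with
  | zero => simpa using sq_nonneg ‖c‖
  | succ n ih =>
    have key : b ^ (n+1) - a ^ (n+1) - ((n+1 : ℕ) : ℚ_[p]) * c * a ^ (n+1-1) =
        (n : ℚ_[p]) * c^2 * a ^ (n-1) +
          b * (b ^ n - a ^ n - (n : ℚ_[p]) * c * a ^ (n - 1)) := by
      rcases n with _ | m
      · subst hc; push_cast; ring
      · have h1 : m + 1 + 1 - 1 = m + 1 := rfl
        have h2 : m + 1 - 1 = m := rfl
        rw [h1, h2]
        subst hc; push_cast; ring
    rw [key]
    refine le_trans (Padic.nonarchimedean _ _) (max_le ?_ ?_)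
    · rw [norm_mul, norm_mul, norm_pow, norm_pow]
      have h1 : ‖(n : ℚ_[p])‖ ≤ 1 := norm_natCast_le_one n
      have h2 : ‖a‖ ^ (n-1) ≤ 1 := pow_le_one₀ (norm_nonneg a) ha
      calc ‖(n : ℚ_[p])‖ * ‖c‖ ^ 2 * ‖a‖ ^ (n-1) ≤ 1 * ‖c‖ ^ 2 * 1 := by
            gcongr <;> positivity
        _ = ‖c‖ ^ 2 := by ring
    · rw [norm_mul]
      calc ‖b‖ * ‖b ^ n - a ^ n - (n : ℚ_[p]) * c * a ^ (n - 1)‖ ≤ 1 * ‖c‖ ^ 2 := by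
            gcongr <;> positivity
        _ = ‖c‖ ^ 2 := by ring


lemma taylor_zpow {a b c : ℚ_[p]} (ha : ‖a‖ = 1) (hb : ‖b‖ = 1) (hc : b = a + c) (k : ℤ) :
    ‖b ^ k - a ^ k - (k : ℚ_[p]) * c * a ^ (k - 1)‖ ≤ ‖c‖ ^ 2 := by
  have hane : a ≠ 0 := by intro h; rw [h, norm_zero] at ha; norm_num at ha
  have hbne : b ≠ 0 := by intro h; rw [h, norm_zero] at hb; norm_num at hb
  rcases k with n | n
  · -- k = (n : ℤ)
    rcases n with _ | m
    · simp [sq_nonneg]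
    · have h1 : (((m+1 : ℕ)) : ℤ) - 1 = ((m : ℕ) : ℤ) := by push_cast; ring
      show ‖b ^ (((m+1:ℕ)):ℤ) - a ^ (((m+1:ℕ)):ℤ) - _ * c * a ^ ((((m+1:ℕ)):ℤ) - 1)‖ ≤ ‖c‖^2
      rw [h1, zpow_natCast, zpow_natCast, zpow_natCast]
      have := taylor_pow ha.le hb.le hc (m+1)
      have h2 : m + 1 - 1 = m := rfl
      rw [h2] at this
      convert this using 3
      simp
  · -- k = Int.negSucc n
    set u := a⁻¹ with hu
    set v := b⁻¹ with hv
    have hau : a * u = 1 := mul_inv_cancel₀ hane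
    have hbv : b * v = 1 := mul_inv_cancel₀ hbne
    have hun : ‖u‖ = 1 := by rw [hu, norm_inv, ha, inv_one]
    have hvn : ‖v‖ = 1 := by rw [hv, norm_inv, hb, inv_one]
    have hc' : v = u + (-(c * u * v)) := by
      have e1 : v - u = u * v * (a - b) := by
        calc v - u = (a*u)*v - (b*v)*u := by rw [hau, hbv]; ring
          _ = u*v*(a-b) := by ring
      have e2 : a - b = -c := by rw [hc]; ring
      rw [e2] at e1
      linear_combination e1
    have hcn : ‖-(c * u * v)‖ = ‖c‖ := by
      rw [norm_neg, norm_mul, norm_mul, hun, hvn]; ring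
    have main := taylor_pow hun.le hvn.le hc' (n+1)
    have h2 : n + 1 - 1 = n := rfl
    rw [h2, hcn] at main
    have e1 : b ^ (Int.negSucc n) = v ^ (n+1) := by
      rw [zpow_negSucc, hv, inv_pow]
    have e2 : a ^ (Int.negSucc n) = u ^ (n+1) := by
      rw [zpow_negSucc, hu, inv_pow]
    have e3 : a ^ (Int.negSucc n - 1) = u ^ (n+2) := by
      have : Int.negSucc n - 1 = Int.negSucc (n+1) := rfl
      rw [this, zpow_negSucc, hu, inv_pow]
    rw [e1, e2, e3, Int.cast_negSucc]
    have identity : v ^ (n+1) - u ^ (n+1) - (-((n+1:ℕ) : ℚ_[p])) * c * u ^ (n+2) =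
        (v ^ (n+1) - u ^ (n+1) - ((n+1 : ℕ) : ℚ_[p]) * (-(c * u * v)) * u ^ n) +
          ((n+1 : ℕ) : ℚ_[p]) * c^2 * u ^ (n+2) * v := by
      push_cast
      linear_combination (-(((n:ℚ_[p])+1) * c * u^(n+1))) * hc'
    rw [identity]
    refine le_trans (Padic.nonarchimedean _ _) (max_le main ?_)
    simp only [norm_mul, norm_pow, hun, hvn, one_pow, mul_one]
    calc ‖((n+1 : ℕ) : ℚ_[p])‖ * ‖c‖ ^ 2 ≤ 1 * ‖c‖^2 := by
          gcongr
          exact norm_natCast_le_one _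
      _ = ‖c‖ ^ 2 := by ring


lemma nat_norm_eq_one (k : ℕ) : ‖(k : ℤ_[p])‖ = 1 ↔ ¬ p ∣ k := by
  have h1 : ‖(k : ℤ_[p])‖ < 1 ↔ (p : ℤ) ∣ (k : ℤ) := by
    have := PadicInt.norm_int_lt_one_iff_dvd (p := p) (k : ℤ)
    simpa using this
  have h2 : ‖(k : ℤ_[p])‖ ≤ 1 := PadicInt.norm_le_one _
  constructor
  · intro h hd
    have : ‖(k : ℤ_[p])‖ < 1 := h1.mpr (Int.natCast_dvd_natCast.mpr hd)
    rw [h] at this; norm_num at this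
  · intro hd
    rcases lt_or_eq_of_le h2 with h | h
    · exact absurd (Int.natCast_dvd_natCast.mp (h1.mp h)) hd
    · exact h

/-- Key local expansion step. -/
lemma key_step (r : ℤ) {x h : ℤ_[p]} (hh : ‖h‖ < 1) :
    ‖Fp p r (x + h) - Fp p r x + (r : ℚ_[p]) * ((h : ℤ_[p]) : ℚ_[p]) * Fp p (r+1) x‖
      ≤ ‖h‖ ^ 2 := by
  by_cases hx : ‖x‖ = 1
  · have hxh : ‖x + h‖ = 1 := by
      have hle : ‖x + h‖ ≤ 1 := PadicInt.norm_le_one _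
      rcases lt_or_eq_of_le hle with hlt | heq
      · exfalso
        have : ‖x‖ ≤ max ‖x + h‖ ‖-h‖ := by
          have := PadicInt.nonarchimedean (x + h) (-h)
          simpa using this
        rw [norm_neg, hx] at this
        have : (1:ℝ) < 1 := lt_of_le_of_lt this (max_lt hlt hh)
        norm_num at this
      · exact heq
    rw [Fp, Fp, Fp, if_pos hxh, if_pos hx, if_pos hx]
    have ha : ‖((x : ℤ_[p]) : ℚ_[p])‖ = 1 := by rw [← PadicInt.norm_def]; exact hx
    have hb : ‖((x + h : ℤ_[p]) : ℚ_[p])‖ = 1 := by rw [← PadicInt.norm_def]; exact hxh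
    have hceq : ((x + h : ℤ_[p]) : ℚ_[p]) = ((x : ℤ_[p]) : ℚ_[p]) + ((h : ℤ_[p]) : ℚ_[p]) := by
      push_cast; ring
    have main := taylor_zpow ha hb hceq (-r)
    have e1 : (-r : ℤ) - 1 = -(r+1) := by ring
    rw [e1] at main
    have e2 : ((-r : ℤ) : ℚ_[p]) = -(r : ℚ_[p]) := by push_cast; ring
    rw [e2] at main
    have e3 : ((x + h : ℤ_[p]) : ℚ_[p]) ^ (-r) - ((x : ℤ_[p]) : ℚ_[p]) ^ (-r) +
        (r : ℚ_[p]) * ((h : ℤ_[p]) : ℚ_[p]) * ((x : ℤ_[p]) : ℚ_[p]) ^ (-(r+1)) =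
        ((x + h : ℤ_[p]) : ℚ_[p]) ^ (-r) - ((x : ℤ_[p]) : ℚ_[p]) ^ (-r) -
        (-(r : ℚ_[p])) * ((h : ℤ_[p]) : ℚ_[p]) * ((x : ℤ_[p]) : ℚ_[p]) ^ (-(r+1)) := by
      ring
    rw [e3]
    have e4 : ‖((h : ℤ_[p]) : ℚ_[p])‖ = ‖h‖ := (PadicInt.norm_def).symm
    rw [e4] at main
    exact main
  · have hx' : ‖x‖ < 1 := lt_of_le_of_ne (PadicInt.norm_le_one x) hx
    have hxh : ¬ ‖x + h‖ = 1 := by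
      have : ‖x + h‖ ≤ max ‖x‖ ‖h‖ := PadicInt.nonarchimedean _ _
      have : ‖x + h‖ < 1 := lt_of_le_of_lt this (max_lt hx' hh)
      exact ne_of_lt this
    rw [Fp, Fp, Fp, if_neg hxh, if_neg hx, if_neg hx]
    simpa using sq_nonneg ‖h‖

lemma sum_range_mul {M : Type*} [AddCommMonoid M] (f : ℕ → M) (m : ℕ) :
    ∀ k : ℕ, ∑ j ∈ range (m * k), f j = ∑ i ∈ range k, ∑ j ∈ range m, f (m * i + j) := by
  intro k
  induction k with
  | zero => simp
  | succ k ih =>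
      rw [Nat.mul_succ, Finset.sum_range_add, ih, Finset.sum_range_succ]


lemma sum_shift_sub {M : Type*} [AddCommGroup M] (f : ℕ → M) (m n : ℕ) :
    (∑ j ∈ range n, f (m + j)) - ∑ j ∈ range n, f j = ∑ j ∈ range m, (f (n + j) - f j) := by
  have h1 := Finset.sum_range_add f m n
  have h2 := Finset.sum_range_add f n m
  rw [Nat.add_comm n m] at h2
  have hA : ∑ j ∈ range n, f (m+j) = (∑ j ∈ range (m+n), f j) - ∑ j ∈ range m, f j := by
    rw [h1]; abel
  have hC : ∑ j ∈ range m, f (n+j) = (∑ j ∈ range (m+n), f j) - ∑ j ∈ range n, f j := by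
    rw [h2]; abel
  rw [Finset.sum_sub_distrib, hA, hC]; abel

lemma sum_Fp_eq_range (r : ℤ) (n : ℕ) :
    ∑ j ∈ range n, Fp p r (j : ℤ_[p]) =
      ∑ k ∈ (range n).filter (fun k => ¬ p ∣ k), ((k : ℚ_[p])) ^ (-r) := by
  rw [Finset.sum_filter]
  refine Finset.sum_congr rfl fun k _ => ?_
  rw [Fp]
  by_cases hd : p ∣ k
  · rw [if_neg (by rw [nat_norm_eq_one]; simpa using hd), if_neg (by simpa using hd)]
  · rw [if_pos hd, if_pos ((nat_norm_eq_one k).mpr hd), PadicInt.coe_natCast]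

lemma sum_Fp_eq (r : ℤ) (n : ℕ) :
    ∑ j ∈ range n, Fp p r (j : ℤ_[p]) =
      ∑ k ∈ (Finset.Ico 1 n).filter (fun k => ¬ p ∣ k), ((k : ℚ_[p])) ^ (-r) := by
  have h0 : Finset.Ico 1 n = (range n).erase 0 := by
    ext k
    simp only [Finset.mem_Ico, Finset.mem_erase, Finset.mem_range]
    omega
  have h1 : Fp p r ((0 : ℕ) : ℤ_[p]) = 0 := by
    rw [Fp, if_neg]
    rw [nat_norm_eq_one]
    simp
  rw [h0, Finset.sum_filter]
  have h2 : (if ¬ p ∣ 0 then ((0:ℕ) : ℚ_[p]) ^ (-r) else 0) = 0 := by simp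
  rw [Finset.sum_erase (f := fun a : ℕ => if ¬ p ∣ a then ((a : ℚ_[p])) ^ (-r) else 0) _ h2]
  refine Finset.sum_congr rfl fun k _ => ?_
  rw [Fp]
  by_cases hd : p ∣ k
  · rw [if_neg (by rw [nat_norm_eq_one]; simpa using hd), if_neg (by simpa using hd)]
  · rw [if_pos hd, if_pos ((nat_norm_eq_one k).mpr hd), PadicInt.coe_natCast]

lemma expand (r : ℤ) (n : ℕ) (w h : ℤ_[p]) (hh : ‖h‖ < 1) :
    ‖(∑ j ∈ range n, Fp p r (w + (j : ℤ_[p]) + h)) - (∑ j ∈ range n, Fp p r (w + (j : ℤ_[p])))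
      + (r : ℚ_[p]) * ((h : ℤ_[p]) : ℚ_[p]) * ∑ j ∈ range n, Fp p (r+1) (w + (j : ℤ_[p]))‖
      ≤ ‖h‖ ^ 2 := by
  have e : (∑ j ∈ range n, Fp p r (w + (j : ℤ_[p]) + h)) -
      (∑ j ∈ range n, Fp p r (w + (j : ℤ_[p])))
      + (r : ℚ_[p]) * ((h : ℤ_[p]) : ℚ_[p]) * ∑ j ∈ range n, Fp p (r+1) (w + (j : ℤ_[p])) =
      ∑ j ∈ range n, (Fp p r ((w + (j : ℤ_[p])) + h) - Fp p r (w + (j : ℤ_[p]))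
        + (r : ℚ_[p]) * ((h : ℤ_[p]) : ℚ_[p]) * Fp p (r+1) (w + (j : ℤ_[p]))) := by
    rw [Finset.sum_add_distrib, Finset.sum_sub_distrib, ← Finset.mul_sum]
  rw [e]
  exact norm_sum_le' _ _ (sq_nonneg _) fun j _ => key_step r hh

lemma cauchySeq_of_tendsto_sub (a : ℕ → ℚ_[p])
    (h : Tendsto (fun s => a (s+1) - a s) atTop (𝓝 0)) : CauchySeq a := by
  rw [Metric.cauchySeq_iff']
  intro ε hε
  rw [NormedAddCommGroup.tendsto_nhds_zero] at h
  obtain ⟨N, hN⟩ := Filter.eventually_atTop.mp (h ε hε)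
  refine ⟨N, fun n hn => ?_⟩
  rw [dist_eq_norm]
  induction n, hn using Nat.le_induction with
  | base => simpa using hε
  | succ n hn ih =>
      have : a (n+1) - a N = (a (n+1) - a n) + (a n - a N) := by ring
      rw [this]
      exact lt_of_le_of_lt (Padic.nonarchimedean _ _)
        (max_lt (hN n hn) ih)

end VolkenbornAux


open VolkenbornAux in
theorem volkenborn_polygamma
    (p : ℕ) [Fact p.Prime] (r : ℤ) (hr : r ≠ 0)
    (ψ : ℤ_[p] → ℤ_[p]) (hψcont : Continuous ψ)
    (hψ : ∀ m : ℕ, ((ψ (m : ℤ_[p]) : ℤ_[p]) : ℚ_[p]) =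
      ∑ k ∈ (Finset.Ico 1 m).filter (fun k => ¬ p ∣ k), ((k : ℚ_[p])) ^ (-(r + 1))) :
    ∃ L : ℚ_[p],
      Tendsto (fun n : ℕ => (p : ℚ_[p]) ^ (-(n : ℤ)) *
          ∑ k ∈ (Finset.range (p ^ n)).filter (fun k => ¬ p ∣ k), ((k : ℚ_[p])) ^ (-r))
        atTop (nhds L) ∧
      ∀ z : ℤ_[p], ∃ Q : ℚ_[p],
        Tendsto (fun s : ℕ => (p : ℚ_[p]) ^ (-(s : ℤ)) *
            ∑ j ∈ Finset.range (p ^ s),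
              if ‖z + (j : ℤ_[p])‖ = 1 then
                (((z + (j : ℤ_[p]) : ℤ_[p]) : ℚ_[p])) ^ (-r)
              else 0)
          atTop (nhds Q) ∧
        -((r : ℚ_[p]))⁻¹ * Q = ((ψ z : ℤ_[p]) : ℚ_[p]) - ((r : ℚ_[p]))⁻¹ * L := by
  have hp' : p.Prime := Fact.out
  have hpR1 : (1:ℝ) < p := by exact_mod_cast hp'.one_lt
  have hpR0 : (0:ℝ) < p := lt_trans one_pos hpR1
  set q : ℝ := (p:ℝ)⁻¹ with hqdef
  have hq0 : 0 < q := by positivity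
  have hq1 : q < 1 := by rw [hqdef]; exact inv_lt_one_of_one_lt₀ hpR1
  have hpQ : (p:ℚ_[p]) ≠ 0 := Nat.cast_ne_zero.mpr hp'.ne_zero
  have hqzpow : ∀ s : ℕ, ((p:ℝ)) ^ (-(s:ℤ)) = q ^ s := by
    intro s
    rw [zpow_neg, zpow_natCast, hqdef, ← inv_pow]
  have hnormPs : ∀ s : ℕ, ‖((p^s : ℕ) : ℤ_[p])‖ = q ^ s := by
    intro s
    rw [Nat.cast_pow, PadicInt.norm_p_pow, hqzpow]
  have hnormPinv : ∀ s : ℕ, ‖(p:ℚ_[p]) ^ (-(s:ℤ))‖ = (q ^ s)⁻¹ := by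
    intro s
    rw [Padic.norm_p_zpow, neg_neg, zpow_natCast, hqdef, ← inv_pow, inv_inv]
  set F : ℤ_[p] → ℚ_[p] := Fp p r with hF
  set G : ℤ_[p] → ℚ_[p] := Fp p (r+1) with hG
  set Ψ : ℤ_[p] → ℚ_[p] := fun x => ((ψ x : ℤ_[p]) : ℚ_[p]) with hΨ
  set SF : ℕ → ℚ_[p] := fun s => ∑ j ∈ range (p ^ s), F (j : ℤ_[p]) with hSF
  set Sf : ℕ → ℚ_[p] := fun s => (p : ℚ_[p]) ^ (-(s:ℤ)) * SF s with hSfdef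
  have hGsum : ∀ n : ℕ, ∑ j ∈ range n, G (j:ℤ_[p]) = Ψ (n:ℤ_[p]) :=
    fun n => (sum_Fp_eq (r+1) n).trans (hψ n).symm
  have hGshift : ∀ m n : ℕ, ∑ j ∈ range n, G ((m:ℤ_[p]) + (j:ℤ_[p]))
      = Ψ (((m+n : ℕ)):ℤ_[p]) - Ψ ((m:ℕ):ℤ_[p]) := by
    intro m n
    have h1 := Finset.sum_range_add (fun j : ℕ => G (j:ℤ_[p])) m n
    rw [hGsum (m+n), hGsum m] at h1
    have h2 : ∑ j ∈ range n, G ((m:ℤ_[p]) + (j:ℤ_[p]))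
        = ∑ i ∈ range n, G (((m + i : ℕ)):ℤ_[p]) := by
      refine Finset.sum_congr rfl fun i _ => ?_
      rw [Nat.cast_add]
    rw [h2]
    linear_combination -h1
  have hψznat : ψ ((0:ℕ):ℤ_[p]) = 0 := by
    have h1 := hψ 0
    have h2 : Finset.Ico 1 0 = (∅ : Finset ℕ) := by decide
    rw [h2] at h1
    simp only [Finset.filter_empty, Finset.sum_empty] at h1
    exact PadicInt.ext h1
  have hψ0 : ψ 0 = 0 := by simpa using hψznat
  -- Part (i): convergence of Sf
  have hcauchy : Tendsto (fun s => Sf (s+1) - Sf s) atTop (𝓝 0) := by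
    rw [NormedAddCommGroup.tendsto_nhds_zero]
    intro ε hε
    have hpow0 : Tendsto (fun s : ℕ => ((p^s : ℕ) : ℤ_[p])) atTop (𝓝 0) := by
      have h1 : Tendsto (fun s : ℕ => ((p:ℤ_[p]))^s) atTop (𝓝 0) :=
        tendsto_pow_atTop_nhds_zero_of_norm_lt_one
          (by rw [PadicInt.norm_p]; exact inv_lt_one_of_one_lt₀ hpR1)
      exact h1.congr fun s => (Nat.cast_pow p s).symm
    have hψlim : Tendsto (fun s : ℕ => ψ ((p^s:ℕ):ℤ_[p])) atTop (𝓝 0) := by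
      have h2 := (hψcont.tendsto 0).comp hpow0
      rwa [hψ0] at h2
    have hψnorm : Tendsto (fun s : ℕ => ‖Ψ ((p^s:ℕ):ℤ_[p])‖) atTop (𝓝 0) := by
      have h2 := hψlim.norm
      rw [norm_zero] at h2
      exact h2.congr fun s => PadicInt.norm_def
    have hE1 : ∀ᶠ s : ℕ in atTop, ‖Ψ ((p^s:ℕ):ℤ_[p])‖ < ε / p :=
      hψnorm.eventually_lt_const (by positivity)
    have hqs0 : Tendsto (fun s : ℕ => q ^ s) atTop (𝓝 0) :=
      tendsto_pow_atTop_nhds_zero_of_lt_one hq0.le hq1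
    have hE2 : ∀ᶠ s : ℕ in atTop, (p:ℝ) * q ^ s < ε := by
      have h3 := hqs0.const_mul (p:ℝ)
      rw [mul_zero] at h3
      exact h3.eventually_lt_const hε
    filter_upwards [hE1, hE2, eventually_ge_atTop 1] with s h1 h2 h3
    set Ψp : ℚ_[p] := Ψ ((p^s:ℕ):ℤ_[p]) with hΨp
    set Cs : ℚ_[p] := ∑ i ∈ range p, (((p^s * i : ℕ) : ℤ_[p]) : ℚ_[p]) with hCs
    have hqs1 : q ^ s < 1 := pow_lt_one₀ hq0.le hq1 (by omega)
    have hhnorm : ∀ i : ℕ, ‖((p^s * i : ℕ) : ℤ_[p])‖ ≤ q ^ s := by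
      intro i
      rw [Nat.cast_mul]
      calc ‖((p^s:ℕ):ℤ_[p]) * ((i:ℕ):ℤ_[p])‖ = q^s * ‖((i:ℕ):ℤ_[p])‖ := by
            rw [norm_mul, hnormPs]
        _ ≤ q^s * 1 := by gcongr; exact PadicInt.norm_le_one _
        _ = q^s := mul_one _
    have hmain : ‖SF (s+1) - (p:ℚ_[p]) * SF s + (r:ℚ_[p]) * Cs * Ψp‖ ≤ q^s * q^s := by
      have hrw : SF (s+1) = ∑ i ∈ range p, ∑ j ∈ range (p^s), F (((p^s * i + j : ℕ)):ℤ_[p]) := by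
        rw [hSF]
        simp only []
        rw [pow_succ]
        exact sum_range_mul (fun j : ℕ => F (j:ℤ_[p])) (p^s) p
      have hpSF : (p:ℚ_[p]) * SF s = ∑ _i ∈ range p, SF s := by
        rw [Finset.sum_const, Finset.card_range, nsmul_eq_mul]
      have hmul : (r:ℚ_[p]) * Cs * Ψp
          = ∑ i ∈ range p, (r:ℚ_[p]) * (((p^s * i:ℕ):ℤ_[p]):ℚ_[p]) * Ψp := by
        rw [hCs, Finset.mul_sum, Finset.sum_mul]
      rw [hrw, hpSF, hmul, ← Finset.sum_sub_distrib, ← Finset.sum_add_distrib]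
      refine norm_sum_le' _ _ (by positivity) fun i _ => ?_
      set h : ℤ_[p] := ((p^s * i : ℕ) : ℤ_[p]) with hhd
      have hhn : ‖h‖ ≤ q ^ s := hhnorm i
      have hh1 : ‖h‖ < 1 := lt_of_le_of_lt hhn hqs1
      have hexp := expand (p := p) r (p^s) 0 h hh1
      have e1 : ∑ j ∈ range (p^s), Fp p r ((0:ℤ_[p]) + (j:ℤ_[p]) + h)
          = ∑ j ∈ range (p^s), F (((p^s * i + j : ℕ)):ℤ_[p]) := by
        refine Finset.sum_congr rfl fun j _ => ?_
        rw [hF, show ((0:ℤ_[p]) + (j:ℕ) + h = (((p^s * i + j : ℕ)):ℤ_[p])) from by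
          rw [hhd]; push_cast; ring]
      have e2 : ∑ j ∈ range (p^s), Fp p r ((0:ℤ_[p]) + (j:ℤ_[p])) = SF s := by
        rw [hSF]; exact Finset.sum_congr rfl fun j _ => by rw [hF, zero_add]
      have e3 : ∑ j ∈ range (p^s), Fp p (r+1) ((0:ℤ_[p]) + (j:ℤ_[p])) = Ψp := by
        rw [hΨp, ← hGsum (p^s)]
        exact Finset.sum_congr rfl fun j _ => by rw [hG, zero_add]
      rw [e1, e2, e3] at hexp
      calc ‖∑ j ∈ range (p^s), F (((p^s * i + j : ℕ)):ℤ_[p]) - SF s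
            + (r:ℚ_[p]) * ((h:ℤ_[p]):ℚ_[p]) * Ψp‖
          ≤ ‖h‖^2 := hexp
        _ ≤ (q^s)^2 := by
            have := pow_le_pow_left₀ (norm_nonneg h) hhn 2
            simpa using this
        _ = q^s * q^s := sq (q^s)
    have hCsn : ‖Cs‖ ≤ q ^ s := by
      rw [hCs]
      refine norm_sum_le' _ _ (by positivity) fun i _ => ?_
      rw [← PadicInt.norm_def]
      exact hhnorm i
    have hsplit : Sf (s+1) - Sf s = (p:ℚ_[p])^(-((s+1:ℕ):ℤ)) *
        ((SF (s+1) - (p:ℚ_[p]) * SF s + (r:ℚ_[p]) * Cs * Ψp) - (r:ℚ_[p]) * Cs * Ψp) := by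
      have e : (p:ℚ_[p])^(-((s+1:ℕ):ℤ)) * (p:ℚ_[p])^(1:ℤ) = (p:ℚ_[p])^(-(s:ℤ)) := by
        rw [← zpow_add₀ hpQ]
        congr 1
        push_cast
        ring
      simp only [hSfdef]
      rw [← e, zpow_one]
      ring
    rw [hsplit, norm_mul, hnormPinv (s+1)]
    have hqkey : ∀ x : ℝ, (q^(s+1))⁻¹ * (q^s * x) = (p:ℝ) * x := by
      intro x
      rw [pow_succ, mul_inv, hqdef, inv_inv]
      have hne : ((p:ℝ)⁻¹)^s ≠ 0 := by positivity
      field_simp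
    have hsub : ‖(SF (s+1) - (p:ℚ_[p]) * SF s + (r:ℚ_[p]) * Cs * Ψp) - (r:ℚ_[p]) * Cs * Ψp‖
        ≤ max (q^s * q^s) (q^s * ‖Ψp‖) := by
      rw [sub_eq_add_neg]
      refine le_trans (Padic.nonarchimedean _ _) (max_le_max hmain ?_)
      rw [norm_neg, norm_mul, norm_mul]
      calc ‖(r:ℚ_[p])‖ * ‖Cs‖ * ‖Ψp‖ ≤ 1 * (q^s) * ‖Ψp‖ := by
            gcongr
            · exact Padic.norm_int_le_one r
        _ = q^s * ‖Ψp‖ := by ring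
    calc (q^(s+1))⁻¹ * ‖(SF (s+1) - (p:ℚ_[p]) * SF s + (r:ℚ_[p]) * Cs * Ψp)
            - (r:ℚ_[p]) * Cs * Ψp‖
        ≤ (q^(s+1))⁻¹ * max (q^s * q^s) (q^s * ‖Ψp‖) := by gcongr
      _ = max ((q^(s+1))⁻¹ * (q^s * q^s)) ((q^(s+1))⁻¹ * (q^s * ‖Ψp‖)) :=
          mul_max_of_nonneg _ _ (by positivity)
      _ = max ((p:ℝ) * (q^s)) ((p:ℝ) * ‖Ψp‖) := by rw [hqkey, hqkey]
      _ < ε := by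
          refine max_lt h2 ?_
          calc (p:ℝ) * ‖Ψp‖ < (p:ℝ) * (ε / p) := by
                exact mul_lt_mul_of_pos_left h1 hpR0
            _ = ε := by field_simp
  obtain ⟨L, hL⟩ := cauchySeq_tendsto_of_complete (cauchySeq_of_tendsto_sub Sf hcauchy)
  refine ⟨L, ?_, ?_⟩
  · have hfun : (fun n : ℕ => (p : ℚ_[p]) ^ (-(n : ℤ)) *
        ∑ k ∈ (Finset.range (p ^ n)).filter (fun k => ¬ p ∣ k), ((k : ℚ_[p])) ^ (-r)) = Sf := by
      funext n
      simp only [hSfdef, hSF, hF]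
      congr 1
      exact (sum_Fp_eq_range (p := p) r (p^n)).symm
    rw [hfun]
    exact hL
  · intro z
    refine ⟨L - (r:ℚ_[p]) * Ψ z, ?_, ?_⟩
    · set Tz : ℕ → ℚ_[p] := fun s => (p:ℚ_[p])^(-(s:ℤ)) * ∑ j ∈ range (p^s), F (z + (j:ℤ_[p]))
        with hTz
      have hgoalfun : (fun s : ℕ => (p : ℚ_[p]) ^ (-(s : ℤ)) *
          ∑ j ∈ Finset.range (p ^ s),
            if ‖z + (j : ℤ_[p])‖ = 1 then
              (((z + (j : ℤ_[p]) : ℤ_[p]) : ℚ_[p])) ^ (-r)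
            else 0) = Tz := rfl
      rw [hgoalfun]
      have herr : Tendsto (fun s => Tz s - Sf s + (r:ℚ_[p]) * Ψ z) atTop (𝓝 0) := by
        rw [NormedAddCommGroup.tendsto_nhds_zero]
        intro ε hε
        have hψu : UniformContinuous ψ := CompactSpace.uniformContinuous_of_continuous hψcont
        obtain ⟨δ, hδ0, hδ⟩ := Metric.uniformContinuous_iff.mp hψu ε hε
        have hqs0 : Tendsto (fun s : ℕ => q ^ s) atTop (𝓝 0) :=
          tendsto_pow_atTop_nhds_zero_of_lt_one hq0.le hq1
        have hE1 : ∀ᶠ s : ℕ in atTop, q ^ s < δ := hqs0.eventually_lt_const hδ0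
        have hE2 : ∀ᶠ s : ℕ in atTop, q ^ s < ε := hqs0.eventually_lt_const hε
        filter_upwards [hE1, hE2, eventually_ge_atTop 1] with s h1 h2 h3
        set m : ℕ := z.appr s with hm
        set h : ℤ_[p] := z - ((m:ℕ):ℤ_[p]) with hh
        have hqs1 : q ^ s < 1 := pow_lt_one₀ hq0.le hq1 (by omega)
        have hqsne : (q:ℝ) ^ s ≠ 0 := by positivity
        have hhn : ‖h‖ ≤ q ^ s := by
          have h4 := PadicInt.appr_spec s z
          have h5 := (PadicInt.norm_le_pow_iff_mem_span_pow (z - ((m:ℕ):ℤ_[p])) s).mpr h4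
          rw [hqzpow s] at h5
          exact h5
        have hh1 : ‖h‖ < 1 := lt_of_le_of_lt hhn hqs1
        have hPn : ‖((p^s:ℕ):ℤ_[p])‖ = q ^ s := hnormPs s
        have hP1 : ‖((p^s:ℕ):ℤ_[p])‖ < 1 := by rw [hPn]; exact hqs1
        -- component 1: expansion around m with shift h
        have hexp1 := expand (p := p) r (p^s) ((m:ℕ):ℤ_[p]) h hh1
        have e1 : ∑ j ∈ range (p^s), Fp p r (((m:ℕ):ℤ_[p]) + (j:ℤ_[p]) + h)
            = ∑ j ∈ range (p^s), F (z + (j:ℤ_[p])) := by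
          refine Finset.sum_congr rfl fun j _ => ?_
          rw [hF, show (((m:ℕ):ℤ_[p]) + (j:ℤ_[p]) + h = z + (j:ℤ_[p])) from by rw [hh]; ring]
        have e2 : ∑ j ∈ range (p^s), Fp p r (((m:ℕ):ℤ_[p]) + (j:ℤ_[p]))
            = ∑ j ∈ range (p^s), F (((m:ℕ):ℤ_[p]) + (j:ℤ_[p])) := by
          refine Finset.sum_congr rfl fun j _ => by rw [hF]
        have e3 : ∑ j ∈ range (p^s), Fp p (r+1) (((m:ℕ):ℤ_[p]) + (j:ℤ_[p]))
            = Ψ (((m + p^s : ℕ)):ℤ_[p]) - Ψ ((m:ℕ):ℤ_[p]) := by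
          rw [← hGshift m (p^s)]
        rw [e1, e2, e3] at hexp1
        -- component 2: telescoping expansion at the integer point m
        have hexp2 := expand (p := p) r m 0 ((p^s:ℕ):ℤ_[p]) hP1
        have f1 : ∑ j ∈ range m, Fp p r ((0:ℤ_[p]) + (j:ℤ_[p]) + ((p^s:ℕ):ℤ_[p]))
            = ∑ j ∈ range m, F (((p^s + j : ℕ)):ℤ_[p]) := by
          refine Finset.sum_congr rfl fun j _ => ?_
          rw [hF, show ((0:ℤ_[p]) + (j:ℤ_[p]) + ((p^s:ℕ):ℤ_[p]) = (((p^s + j : ℕ)):ℤ_[p])) from by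
            push_cast; ring]
        have f2 : ∑ j ∈ range m, Fp p r ((0:ℤ_[p]) + (j:ℤ_[p]))
            = ∑ j ∈ range m, F ((j:ℕ):ℤ_[p]) := by
          refine Finset.sum_congr rfl fun j _ => by rw [hF, zero_add]
        have f3 : ∑ j ∈ range m, Fp p (r+1) ((0:ℤ_[p]) + (j:ℤ_[p])) = Ψ ((m:ℕ):ℤ_[p]) := by
          rw [← hGsum m]
          exact Finset.sum_congr rfl fun j _ => by rw [hG, zero_add]
        rw [f1, f2, f3] at hexp2
        -- telescope identity
        have hshift := sum_shift_sub (fun k : ℕ => F ((k:ℕ):ℤ_[p])) m (p^s)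
        have g1 : ∑ j ∈ range (p^s), F (((m + j : ℕ)):ℤ_[p])
            = ∑ j ∈ range (p^s), F (((m:ℕ):ℤ_[p]) + (j:ℤ_[p])) := by
          refine Finset.sum_congr rfl fun j _ => by rw [Nat.cast_add]
        rw [g1, Finset.sum_sub_distrib] at hshift
        -- abbreviations
        set P' : ℚ_[p] := (((p^s:ℕ):ℤ_[p]) : ℚ_[p]) with hP'
        have hPinv : (p:ℚ_[p])^(-(s:ℤ)) * P' = 1 := by
          rw [hP']
          rw [show ((((p^s:ℕ):ℤ_[p]) : ℚ_[p]) = (p:ℚ_[p])^(s:ℤ)) from by push_cast; norm_cast]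
          rw [← zpow_add₀ hpQ]
          norm_num
        set Δ : ℚ_[p] := Ψ (((m + p^s : ℕ)):ℤ_[p]) - Ψ ((m:ℕ):ℤ_[p]) with hΔ
        set Ψm : ℚ_[p] := Ψ ((m:ℕ):ℤ_[p]) with hΨm
        set A : ℚ_[p] := ∑ j ∈ range (p^s), F (z + (j:ℤ_[p])) with hA
        set B : ℚ_[p] := ∑ j ∈ range (p^s), F (((m:ℕ):ℤ_[p]) + (j:ℤ_[p])) with hB
        set C1 : ℚ_[p] := ∑ j ∈ range m, F (((p^s + j : ℕ)):ℤ_[p]) with hC1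
        set C0 : ℚ_[p] := ∑ j ∈ range m, F ((j:ℕ):ℤ_[p]) with hC0
        set SFs : ℚ_[p] := ∑ j ∈ range (p^s), F ((j:ℕ):ℤ_[p]) with hSFs
        set h' : ℚ_[p] := ((h:ℤ_[p]) : ℚ_[p]) with hh'
        have hh'n : ‖h'‖ ≤ q ^ s := by rw [hh', ← PadicInt.norm_def]; exact hhn
        -- the four components
        set X1 : ℚ_[p] := (p:ℚ_[p])^(-(s:ℤ)) * (A - B + (r:ℚ_[p]) * h' * Δ) with hX1
        set X2 : ℚ_[p] := (p:ℚ_[p])^(-(s:ℤ)) * (C1 - C0 + (r:ℚ_[p]) * P' * Ψm) with hX2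
        set X3 : ℚ_[p] := -((p:ℚ_[p])^(-(s:ℤ)) * ((r:ℚ_[p]) * h' * Δ)) with hX3
        set X4 : ℚ_[p] := (r:ℚ_[p]) * (Ψ z - Ψm) with hX4
        have hTzs : Tz s = (p:ℚ_[p])^(-(s:ℤ)) * A := by rw [hA]
        have hSfs : Sf s = (p:ℚ_[p])^(-(s:ℤ)) * SFs := by rw [hSFs]
        have hsplit : Tz s - Sf s + (r:ℚ_[p]) * Ψ z = X1 + X2 + X3 + X4 := by
          rw [hTzs, hSfs, hX1, hX2, hX3, hX4]
          linear_combination (p:ℚ_[p])^(-(s:ℤ)) * hshift - Ψm * hPinv * (r:ℚ_[p])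
        -- norms of the components
        have hX1n : ‖X1‖ < ε := by
          rw [hX1, norm_mul, hnormPinv s]
          calc (q^s)⁻¹ * ‖A - B + (r:ℚ_[p]) * h' * Δ‖ ≤ (q^s)⁻¹ * (q^s * q^s) := by
                gcongr
                calc ‖A - B + (r:ℚ_[p]) * h' * Δ‖ ≤ ‖h‖^2 := hexp1
                  _ ≤ (q^s)^2 := by
                      have := pow_le_pow_left₀ (norm_nonneg h) hhn 2
                      simpa using this
                  _ = q^s * q^s := sq (q^s)
            _ = q^s := by field_simp
            _ < ε := h2
        have hX2n : ‖X2‖ < ε := by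
          rw [hX2, norm_mul, hnormPinv s]
          calc (q^s)⁻¹ * ‖C1 - C0 + (r:ℚ_[p]) * P' * Ψm‖ ≤ (q^s)⁻¹ * (q^s * q^s) := by
                gcongr
                calc ‖C1 - C0 + (r:ℚ_[p]) * P' * Ψm‖ ≤ ‖((p^s:ℕ):ℤ_[p])‖^2 := hexp2
                  _ = q^s * q^s := by rw [hPn]; exact sq (q^s)
            _ = q^s := by field_simp
            _ < ε := h2
        have hΔn : ‖Δ‖ < ε := by
          have hc : Δ = ((ψ (((m + p^s : ℕ)):ℤ_[p]) - ψ ((m:ℕ):ℤ_[p]) : ℤ_[p]) : ℚ_[p]) := by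
            rw [hΔ, hΨ, PadicInt.coe_sub]
          rw [hc, ← PadicInt.norm_def, ← dist_eq_norm]
          refine hδ ?_
          rw [dist_eq_norm]
          have : (((m + p^s : ℕ)):ℤ_[p]) - ((m:ℕ):ℤ_[p]) = ((p^s:ℕ):ℤ_[p]) := by
            push_cast; ring
          rw [this, hPn]
          exact h1
        have hX3n : ‖X3‖ < ε := by
          rw [hX3, norm_neg, norm_mul, hnormPinv s, norm_mul, norm_mul]
          calc (q^s)⁻¹ * (‖(r:ℚ_[p])‖ * ‖h'‖ * ‖Δ‖) ≤ (q^s)⁻¹ * (1 * (q^s) * ‖Δ‖) := by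
                gcongr
                exact Padic.norm_int_le_one r
            _ = ‖Δ‖ := by field_simp
            _ < ε := hΔn
        have hX4n : ‖X4‖ < ε := by
          rw [hX4, norm_mul]
          have hc : Ψ z - Ψm = ((ψ z - ψ ((m:ℕ):ℤ_[p]) : ℤ_[p]) : ℚ_[p]) := by
            rw [hΨm, hΨ, PadicInt.coe_sub]
          calc ‖(r:ℚ_[p])‖ * ‖Ψ z - Ψm‖ ≤ 1 * ‖Ψ z - Ψm‖ := by
                gcongr
                exact Padic.norm_int_le_one r
            _ = ‖Ψ z - Ψm‖ := one_mul _
            _ < ε := by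
                rw [hc, ← PadicInt.norm_def, ← dist_eq_norm]
                refine hδ ?_
                rw [dist_eq_norm]
                calc ‖z - ((m:ℕ):ℤ_[p])‖ = ‖h‖ := by rw [hh]
                  _ ≤ q^s := hhn
                  _ < δ := h1
        rw [hsplit]
        have b1 : ‖X1 + X2‖ < ε :=
          lt_of_le_of_lt (Padic.nonarchimedean _ _) (max_lt hX1n hX2n)
        have b2 : ‖X1 + X2 + X3‖ < ε :=
          lt_of_le_of_lt (Padic.nonarchimedean _ _) (max_lt b1 hX3n)
        exact lt_of_le_of_lt (Padic.nonarchimedean _ _) (max_lt b2 hX4n)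
      have h2 : Tz = fun s => ((Tz s - Sf s + (r:ℚ_[p]) * Ψ z) + Sf s) - (r:ℚ_[p]) * Ψ z :=
        funext fun s => by ring
      rw [h2]
      have := (herr.add hL).sub_const ((r:ℚ_[p]) * Ψ z)
      simpa using this
    · have hrQ : (r:ℚ_[p]) ≠ 0 := Int.cast_ne_zero.mpr hr
      rw [hΨ]
      field_simp
      ring
end

section
/- Let p be a prime, a, b ∈ ℤ_p, and let a₀, b₀ ∈ {0, 1, …, p−1} be the unique integers with a ≡ −a₀ mod p and b ≡ −b₀ mod p. Then the truncated hypergeometric sum satisfies Σ_{n=0}^{p−1} ((a)_n/n!) · ((b)_n/n!) ≡ (a₀+b₀)! / (a₀! · b₀!) mod p ℤ_p (note each (a)_n/n! lies in ℤ_p). In particular, this truncated sum is a p-adic unit if and only if a₀ + b₀ ≤ p − 1. -/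
open Finset

theorem truncated_hypergeometric_value_at_one_mod_p
    (p : ℕ) [Fact p.Prime] (a b : ℤ_[p]) (a₀ b₀ : ℕ)
    (ha₀ : a₀ < p) (hb₀ : b₀ < p)
    (ha : ∃ u : ℤ_[p], a + (a₀ : ℤ_[p]) = p * u)
    (hb : ∃ u : ℤ_[p], b + (b₀ : ℤ_[p]) = p * u) :
    ‖(∑ n ∈ Finset.range p,
        ((((ascPochhammer ℤ_[p] n).eval a : ℤ_[p]) : ℚ_[p]) / (n.factorial : ℚ_[p])) *
          ((((ascPochhammer ℤ_[p] n).eval b : ℤ_[p]) : ℚ_[p]) / (n.factorial : ℚ_[p])))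
        - (((a₀ + b₀).choose a₀ : ℕ) : ℚ_[p])‖ ≤ ((p : ℝ))⁻¹ ∧
    (‖∑ n ∈ Finset.range p,
        ((((ascPochhammer ℤ_[p] n).eval a : ℤ_[p]) : ℚ_[p]) / (n.factorial : ℚ_[p])) *
          ((((ascPochhammer ℤ_[p] n).eval b : ℤ_[p]) : ℚ_[p]) / (n.factorial : ℚ_[p]))‖ = 1
      ↔ a₀ + b₀ ≤ p - 1) := by
  have hp : p.Prime := Fact.out
  have hp1 : 1 < p := hp.one_lt
  -- notation
  set T : ℕ → ℚ_[p] := fun n =>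
    ((((ascPochhammer ℤ_[p] n).eval a : ℤ_[p]) : ℚ_[p]) / (n.factorial : ℚ_[p])) *
      ((((ascPochhammer ℤ_[p] n).eval b : ℤ_[p]) : ℚ_[p]) / (n.factorial : ℚ_[p])) with hT
  set c : ℕ → ℚ_[p] := fun n => ((a₀.choose n * b₀.choose n : ℕ) : ℚ_[p]) with hc
  -- factorials are units
  have hfact : ∀ n, n < p → ‖(n.factorial : ℚ_[p])‖ = 1 := by
    intro n hn
    have h1 : ‖((n.factorial : ℤ) : ℚ_[p])‖ ≤ 1 := Padic.norm_int_le_one _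
    have h2 : ¬ ‖((n.factorial : ℤ) : ℚ_[p])‖ < 1 := by
      rw [Padic.norm_intCast_lt_one_iff]
      rw [Int.natCast_dvd_natCast, hp.dvd_factorial]
      omega
    have := le_antisymm h1 (not_lt.mp h2)
    simpa using this
  -- evaluation at -a₀
  have hevalneg : ∀ (k n : ℕ),
      (ascPochhammer ℤ_[p] n).eval (-(k : ℤ_[p]))
        = (-1) ^ n * ((n.factorial * k.choose n : ℕ) : ℤ_[p]) := by
    intro k n
    rw [ascPochhammer_eval_neg_eq_descPochhammer, descPochhammer_eval_eq_descFactorial,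
      Nat.descFactorial_eq_factorial_mul_choose]
  -- key divisibility
  have hdvd : ∀ n : ℕ, ∃ u : ℤ_[p],
      (ascPochhammer ℤ_[p] n).eval a * (ascPochhammer ℤ_[p] n).eval b
        - ((n.factorial * a₀.choose n : ℕ) : ℤ_[p]) * ((n.factorial * b₀.choose n : ℕ) : ℤ_[p])
        = (p : ℤ_[p]) * u := by
    intro n
    obtain ⟨u, hu⟩ := ha
    obtain ⟨v, hv⟩ := hb
    have hda : (p : ℤ_[p]) ∣
        ((ascPochhammer ℤ_[p] n).eval a - (ascPochhammer ℤ_[p] n).eval (-(a₀ : ℤ_[p]))) := by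
      refine dvd_trans ?_ (Polynomial.sub_dvd_eval_sub a (-(a₀ : ℤ_[p])) _)
      rw [sub_neg_eq_add, hu]
      exact Dvd.intro u rfl
    have hdb : (p : ℤ_[p]) ∣
        ((ascPochhammer ℤ_[p] n).eval b - (ascPochhammer ℤ_[p] n).eval (-(b₀ : ℤ_[p]))) := by
      refine dvd_trans ?_ (Polynomial.sub_dvd_eval_sub b (-(b₀ : ℤ_[p])) _)
      rw [sub_neg_eq_add, hv]
      exact Dvd.intro v rfl
    have habAB : (p : ℤ_[p]) ∣
        ((ascPochhammer ℤ_[p] n).eval a * (ascPochhammer ℤ_[p] n).eval b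
          - (ascPochhammer ℤ_[p] n).eval (-(a₀ : ℤ_[p]))
              * (ascPochhammer ℤ_[p] n).eval (-(b₀ : ℤ_[p]))) := by
      have : (ascPochhammer ℤ_[p] n).eval a * (ascPochhammer ℤ_[p] n).eval b
          - (ascPochhammer ℤ_[p] n).eval (-(a₀ : ℤ_[p]))
              * (ascPochhammer ℤ_[p] n).eval (-(b₀ : ℤ_[p]))
          = ((ascPochhammer ℤ_[p] n).eval a - (ascPochhammer ℤ_[p] n).eval (-(a₀ : ℤ_[p])))
              * (ascPochhammer ℤ_[p] n).eval b
            + (ascPochhammer ℤ_[p] n).eval (-(a₀ : ℤ_[p]))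
              * ((ascPochhammer ℤ_[p] n).eval b - (ascPochhammer ℤ_[p] n).eval (-(b₀ : ℤ_[p]))) := by
        ring
      rw [this]
      exact dvd_add (hda.mul_right _) (hdb.mul_left _)
    have hAB : (ascPochhammer ℤ_[p] n).eval (-(a₀ : ℤ_[p]))
          * (ascPochhammer ℤ_[p] n).eval (-(b₀ : ℤ_[p]))
        = ((n.factorial * a₀.choose n : ℕ) : ℤ_[p]) * ((n.factorial * b₀.choose n : ℕ) : ℤ_[p]) := by
      rw [hevalneg, hevalneg]
      have h1 : ((-1 : ℤ_[p]) ^ n) * ((-1 : ℤ_[p]) ^ n) = 1 := by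
        rw [← mul_pow]; norm_num
      calc (-1 : ℤ_[p]) ^ n * ((n.factorial * a₀.choose n : ℕ) : ℤ_[p])
            * ((-1) ^ n * ((n.factorial * b₀.choose n : ℕ) : ℤ_[p]))
          = ((-1 : ℤ_[p]) ^ n * (-1) ^ n) * (((n.factorial * a₀.choose n : ℕ) : ℤ_[p])
            * ((n.factorial * b₀.choose n : ℕ) : ℤ_[p])) := by ring
        _ = _ := by rw [h1, one_mul]
    rw [← hAB]
    exact habAB
  -- per-term estimate
  have key : ∀ n ∈ Finset.range p, ‖T n - c n‖ ≤ ((p : ℝ))⁻¹ := by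
    intro n hn
    have hn' := Finset.mem_range.mp hn
    have hf1 : ‖(n.factorial : ℚ_[p])‖ = 1 := hfact n hn'
    have hf0 : (n.factorial : ℚ_[p]) ≠ 0 := by
      exact_mod_cast Nat.cast_ne_zero.mpr n.factorial_ne_zero
    obtain ⟨u, hu⟩ := hdvd n
    have hrw : T n - c n
        = (((p : ℤ_[p]) * u : ℤ_[p]) : ℚ_[p]) / ((n.factorial : ℚ_[p]) * (n.factorial : ℚ_[p])) := by
      rw [hT, hc]
      have hnum : (((p : ℤ_[p]) * u : ℤ_[p]) : ℚ_[p])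
          = (((ascPochhammer ℤ_[p] n).eval a : ℤ_[p]) : ℚ_[p])
              * (((ascPochhammer ℤ_[p] n).eval b : ℤ_[p]) : ℚ_[p])
            - ((a₀.choose n * b₀.choose n : ℕ) : ℚ_[p])
              * ((n.factorial : ℚ_[p]) * (n.factorial : ℚ_[p])) := by
        rw [← hu]
        push_cast
        ring
      rw [hnum]
      field_simp
    rw [hrw]
    rw [norm_div, norm_mul, hf1, mul_one, div_one, PadicInt.padic_norm_e_of_padicInt]
    calc ‖(p : ℤ_[p]) * u‖ ≤ ‖(p : ℤ_[p])‖ * ‖u‖ := norm_mul_le _ _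
      _ ≤ ‖(p : ℤ_[p])‖ * 1 := by
          exact mul_le_mul_of_nonneg_left u.norm_le_one (norm_nonneg _)
      _ = ((p : ℝ))⁻¹ := by rw [mul_one, PadicInt.norm_p]
  -- Vandermonde
  have hvan : ∑ n ∈ Finset.range p, (a₀.choose n * b₀.choose n) = (a₀ + b₀).choose a₀ := by
    have h1 : ∑ n ∈ Finset.range p, (a₀.choose n * b₀.choose n)
        = ∑ n ∈ Finset.range (a₀ + 1), (a₀.choose n * b₀.choose n) := by
      refine (Finset.sum_subset ?_ ?_).symm
      · intro x hx
        simp only [Finset.mem_range] at hx ⊢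
        omega
      · intro x _ hx
        simp only [Finset.mem_range, not_lt] at hx
        rw [Nat.choose_eq_zero_of_lt (by omega), zero_mul]
    rw [h1, Nat.add_choose_eq, Finset.Nat.sum_antidiagonal_eq_sum_range_succ_mk,
      ← Finset.sum_range_reflect]
    refine Finset.sum_congr rfl fun k hk => ?_
    have hk' := Finset.mem_range.mp hk
    simp only [Nat.add_sub_cancel]
    rw [Nat.choose_symm (by omega : k ≤ a₀)]
  -- the main congruence
  have hsum : ‖(∑ n ∈ Finset.range p, T n) - (((a₀ + b₀).choose a₀ : ℕ) : ℚ_[p])‖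
      ≤ ((p : ℝ))⁻¹ := by
    have hC : (((a₀ + b₀).choose a₀ : ℕ) : ℚ_[p]) = ∑ n ∈ Finset.range p, c n := by
      rw [hc, ← hvan]
      push_cast
      rfl
    rw [hC, ← Finset.sum_sub_distrib]
    refine IsUltrametricDist.norm_sum_le_of_forall_le_of_nonneg ?_ key
    positivity
  refine ⟨hsum, ?_⟩
  have hplt : ((p : ℝ))⁻¹ < 1 := by
    rw [inv_lt_one_iff₀]
    right
    exact_mod_cast hp1
  constructor
  · -- norm = 1 → a₀ + b₀ ≤ p - 1
    intro hnorm
    by_contra hcon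
    have hge : p ≤ a₀ + b₀ := by omega
    have hdvdC : p ∣ (a₀ + b₀).choose a₀ := Nat.Prime.dvd_choose_add hp ha₀ hb₀ hge
    obtain ⟨m, hm⟩ := hdvdC
    have hCnorm : ‖(((a₀ + b₀).choose a₀ : ℕ) : ℚ_[p])‖ ≤ ((p : ℝ))⁻¹ := by
      rw [hm]
      push_cast
      calc ‖(p : ℚ_[p]) * (m : ℚ_[p])‖ ≤ ‖(p : ℚ_[p])‖ * ‖(m : ℚ_[p])‖ := norm_mul_le _ _
        _ ≤ ‖(p : ℚ_[p])‖ * 1 := by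
            refine mul_le_mul_of_nonneg_left ?_ (norm_nonneg _)
            have := Padic.norm_int_le_one (p := p) (m : ℤ)
            simpa using this
        _ = ((p : ℝ))⁻¹ := by rw [mul_one, Padic.norm_p]
    have : ‖∑ n ∈ Finset.range p, T n‖ ≤ ((p : ℝ))⁻¹ := by
      have := norm_add_le ((∑ n ∈ Finset.range p, T n) - (((a₀ + b₀).choose a₀ : ℕ) : ℚ_[p]))
        (((a₀ + b₀).choose a₀ : ℕ) : ℚ_[p])
      rw [sub_add_cancel] at this
      calc ‖∑ n ∈ Finset.range p, T n‖
          = ‖((∑ n ∈ Finset.range p, T n) - (((a₀ + b₀).choose a₀ : ℕ) : ℚ_[p]))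
              + (((a₀ + b₀).choose a₀ : ℕ) : ℚ_[p])‖ := by rw [sub_add_cancel]
        _ ≤ max ‖(∑ n ∈ Finset.range p, T n) - (((a₀ + b₀).choose a₀ : ℕ) : ℚ_[p])‖
              ‖(((a₀ + b₀).choose a₀ : ℕ) : ℚ_[p])‖ := IsUltrametricDist.norm_add_le_max _ _
        _ ≤ ((p : ℝ))⁻¹ := max_le hsum hCnorm
    rw [hnorm] at this
    exact absurd (lt_of_le_of_lt this hplt) (lt_irrefl 1)
  · -- a₀ + b₀ ≤ p - 1 → norm = 1
    intro hle
    have hlt : a₀ + b₀ < p := by omega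
    have hndvd : ¬ p ∣ (a₀ + b₀).choose a₀ := by
      intro hdvdC
      have h1 : (a₀ + b₀).choose a₀ * (a₀.factorial * b₀.factorial) = (a₀ + b₀).factorial := by
        rw [← mul_assoc, Nat.choose_symm_add]
        exact Nat.add_choose_mul_factorial_mul_factorial a₀ b₀
      have h2 : p ∣ (a₀ + b₀).factorial := by
        rw [← h1]
        exact hdvdC.mul_right _
      rw [hp.dvd_factorial] at h2
      omega
    have hCnorm : ‖(((a₀ + b₀).choose a₀ : ℕ) : ℚ_[p])‖ = 1 := by
      have h1 : ‖(((a₀ + b₀).choose a₀ : ℤ) : ℚ_[p])‖ ≤ 1 := Padic.norm_int_le_one _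
      have h2 : ¬ ‖(((a₀ + b₀).choose a₀ : ℤ) : ℚ_[p])‖ < 1 := by
        rw [Padic.norm_intCast_lt_one_iff, Int.natCast_dvd_natCast]
        exact hndvd
      have := le_antisymm h1 (not_lt.mp h2)
      simpa using this
    have hne : ‖(((a₀ + b₀).choose a₀ : ℕ) : ℚ_[p])‖
        ≠ ‖(∑ n ∈ Finset.range p, T n) - (((a₀ + b₀).choose a₀ : ℕ) : ℚ_[p])‖ := by
      rw [hCnorm]
      exact ne_of_gt (lt_of_le_of_lt hsum hplt)
    have := IsUltrametricDist.norm_add_eq_max_of_norm_ne_norm hne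
    rw [add_sub_cancel] at this
    rw [this, hCnorm]
    rw [max_eq_left]
    exact le_of_lt (lt_of_le_of_lt hsum hplt)
end
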